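/- arXiv:2304.01465 — 7 statements merged into one kernel-verified Lean document; each statement's English description precedes it below -/
import Mathlib

section
/- Let ω be a majorant differentiable on (0,1] with ω' non-increasing on (0,1], and let φ be a holomorphic self-map of the unit disk 𝔻. Then the function z ↦ ω(1 - |φ(z)|) is superharmonic on 𝔻, i.e., for every z ∈ 𝔻 and 0 < r < 1 - |z|, ω(1 - |φ(z)|) ≥ (1/2π)∫₀^{2π} ω(1 - |φ(z + re^{iτ})|) dτ. -/
open Metric Real MeasureTheory

def IsMajorant (ω : ℝ → ℝ) : Prop :=
  ContinuousOn ω (Set.Ici 0) ∧ MonotoneOn ω (Set.Ici 0) ∧ ω 0 = 0 ∧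
  ∀ s t : ℝ, 0 < s → s ≤ t → ω t / t ≤ ω s / s

theorem stmt5_meanvalue (φ : ℂ → ℂ) (hφ : DifferentiableOn ℂ φ (ball (0:ℂ) 1))
    (z : ℂ) (r : ℝ) (hr : 0 < r) (hr1 : r < 1 - ‖z‖) :
    (2 * π) * ‖φ z‖ ≤ ∫ τ in (0:ℝ)..(2 * π), ‖φ (circleMap z r τ)‖ := by
  have hsub : closedBall z r ⊆ ball (0:ℂ) 1 := by
    intro w hw
    rw [mem_closedBall] at hw
    rw [mem_ball, dist_zero_right]
    calc ‖w‖ = ‖z + (w - z)‖ := by ring_nf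
    _ ≤ ‖z‖ + ‖w - z‖ := norm_add_le _ _
    _ ≤ ‖z‖ + r := by
        have : ‖w - z‖ ≤ r := by rwa [← dist_eq_norm]
        linarith
    _ < 1 := by linarith
  have hdc : DiffContOnCl ℂ φ (ball z r) := by
    refine ⟨hφ.mono (ball_subset_closedBall.trans hsub), hφ.continuousOn.mono ?_⟩
    exact closure_ball_subset_closedBall.trans hsub
  have hint := hdc.circleIntegral_sub_inv_smul (mem_ball_self hr)
  rw [circleIntegral] at hint
  have heq : ∀ θ ∈ Set.uIcc (0:ℝ) (2 * π),
      deriv (circleMap z r) θ • (circleMap z r θ - z)⁻¹ • φ (circleMap z r θ)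
        = Complex.I • φ (circleMap z r θ) := by
    intro θ _
    rw [deriv_circleMap, circleMap_sub_center, smul_smul]
    congr 1
    have h0 : circleMap 0 r θ ≠ 0 := circleMap_ne_center hr.ne' (c := 0)
    field_simp
  rw [intervalIntegral.integral_congr heq, intervalIntegral.integral_smul] at hint
  have h2 : (∫ θ in (0:ℝ)..(2 * π), φ (circleMap z r θ)) = (2 * π : ℂ) * φ z := by
    apply mul_left_cancel₀ Complex.I_ne_zero
    have : Complex.I • ∫ θ in (0:ℝ)..(2 * π), φ (circleMap z r θ)
        = Complex.I * ∫ θ in (0:ℝ)..(2 * π), φ (circleMap z r θ) := rfl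
    rw [← this, hint]
    simp only [smul_eq_mul]
    ring
  have h3 : ‖∫ θ in (0:ℝ)..(2 * π), φ (circleMap z r θ)‖ = (2 * π) * ‖φ z‖ := by
    rw [h2, norm_mul]
    congr 1
    simp [abs_of_pos Real.pi_pos]
  calc (2 * π) * ‖φ z‖ = ‖∫ θ in (0:ℝ)..(2 * π), φ (circleMap z r θ)‖ := h3.symm
  _ ≤ ∫ θ in (0:ℝ)..(2 * π), ‖φ (circleMap z r θ)‖ :=
      intervalIntegral.norm_integral_le_integral_norm (by positivity)

theorem stmt5 (ω ω' : ℝ → ℝ) (hm : IsMajorant ω)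
    (hd : ∀ t ∈ Set.Ioc (0:ℝ) 1, HasDerivAt ω (ω' t) t)
    (hanti : ∀ s ∈ Set.Ioc (0:ℝ) 1, ∀ t ∈ Set.Ioc (0:ℝ) 1, s ≤ t → ω' t ≤ ω' s)
    (φ : ℂ → ℂ) (hφ : DifferentiableOn ℂ φ (ball (0:ℂ) 1))
    (hmaps : ∀ z ∈ ball (0:ℂ) 1, φ z ∈ ball (0:ℂ) 1)
    (z : ℂ) (hz : z ∈ ball (0:ℂ) 1) (r : ℝ) (hr : 0 < r) (hr1 : r < 1 - ‖z‖) :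
    (1 / (2 * π)) *
        ∫ τ in (0:ℝ)..(2 * π), ω (1 - ‖φ (z + (r : ℂ) * Complex.exp (τ * Complex.I))‖)
      ≤ ω (1 - ‖φ z‖) := by
  obtain ⟨hcont, hmono, hzero, -⟩ := hm
  have hπ : (0:ℝ) < 2 * π := by positivity
  -- circle lies in the unit ball
  have hsub : closedBall z r ⊆ ball (0:ℂ) 1 := by
    intro w hw
    rw [mem_closedBall] at hw
    rw [mem_ball, dist_zero_right]
    calc ‖w‖ = ‖z + (w - z)‖ := by ring_nf
    _ ≤ ‖z‖ + ‖w - z‖ := norm_add_le _ _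
    _ ≤ ‖z‖ + r := by
        have : ‖w - z‖ ≤ r := by rwa [← dist_eq_norm]
        linarith
    _ < 1 := by linarith
  have hmem : ∀ τ : ℝ, circleMap z r τ ∈ ball (0:ℂ) 1 := fun τ =>
    hsub (circleMap_mem_closedBall z hr.le τ)
  -- continuity of φ along the circle
  have hφc : Continuous fun τ : ℝ => φ (circleMap z r τ) := by
    rw [← continuousOn_univ]
    exact hφ.continuousOn.comp (continuous_circleMap z r).continuousOn fun τ _ => hmem τ
  -- maximum M < 1 of ‖φ‖ on the circle
  obtain ⟨w₀, hw₀, hmax⟩ := (isCompact_sphere z r).exists_isMaxOn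
    (NormedSpace.sphere_nonempty.mpr hr.le)
    ((hφ.continuousOn.mono (sphere_subset_closedBall.trans hsub)).norm)
  set M : ℝ := ‖φ w₀‖ with hM
  have hM1 : M < 1 := by
    have := hmaps w₀ (hsub (sphere_subset_closedBall hw₀))
    rwa [mem_ball, dist_zero_right] at this
  have hM0 : 0 ≤ M := norm_nonneg _
  -- the function u
  set u : ℝ → ℝ := fun τ => 1 - ‖φ (circleMap z r τ)‖ with hu
  have huc : Continuous u := by continuity
  have humem : ∀ τ : ℝ, u τ ∈ Set.Icc (1 - M) 1 := by
    intro τ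
    constructor
    · have h := hmax (circleMap_mem_sphere z hr.le τ)
      simp only [Set.mem_setOf_eq] at h
      simp only [hu]; linarith
    · simp only [hu]; linarith [norm_nonneg (φ (circleMap z r τ))]
  have hIcc : Set.Icc (1-M) 1 ⊆ Set.Ici (0:ℝ) := fun x hx => le_trans (by linarith) hx.1
  have hIoo : Set.Ioo (1-M) 1 ⊆ Set.Ioc (0:ℝ) 1 := fun x hx => ⟨by linarith [hx.1], hx.2.le⟩
  -- concavity of ω on Icc (1-M) 1
  have hconc : ConcaveOn ℝ (Set.Icc (1-M) 1) ω := by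
    apply AntitoneOn.concaveOn_of_deriv (convex_Icc _ _) (hcont.mono hIcc)
    · rw [interior_Icc]
      exact fun x hx => ((hd x (hIoo hx)).differentiableAt).differentiableWithinAt
    · rw [interior_Icc]
      intro x hx y hy hxy
      rw [(hd x (hIoo hx)).deriv, (hd y (hIoo hy)).deriv]
      exact hanti x (hIoo hx) y (hIoo hy) hxy
  -- set up the measure
  set μ : Measure ℝ := volume.restrict (Set.Ioc 0 (2 * π)) with hμ
  have hμuniv : μ Set.univ = ENNReal.ofReal (2 * π) := by
    rw [hμ, Measure.restrict_apply_univ, Real.volume_Ioc, sub_zero]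
  haveI : IsFiniteMeasure μ := ⟨by rw [hμuniv]; exact ENNReal.ofReal_lt_top⟩
  haveI : NeZero μ := by
    constructor
    intro h
    have := hμuniv
    rw [h] at this
    simp only [Measure.coe_zero, Pi.zero_apply] at this
    rw [eq_comm, ENNReal.ofReal_eq_zero] at this
    linarith
  have htoReal : μ.real Set.univ = 2 * π := by
    rw [measureReal_def, hμuniv, ENNReal.toReal_ofReal hπ.le]
  -- integrability
  have hfi : Integrable u μ := huc.integrableOn_Ioc
  have hωu : Continuous fun τ => ω (u τ) := by
    rw [← continuousOn_univ]
    exact hcont.comp huc.continuousOn fun τ _ => hIcc (humem τ)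
  have hgi : Integrable (ω ∘ u) μ := hωu.integrableOn_Ioc
  -- Jensen
  have hJ : (⨍ τ, ω (u τ) ∂μ) ≤ ω (⨍ τ, u τ ∂μ) :=
    hconc.le_map_average (hcont.mono hIcc) isClosed_Icc
      (Filter.Eventually.of_forall humem) hfi hgi
  -- mean value inequality
  have key := stmt5_meanvalue φ hφ z r hr hr1
  -- compute the average of u
  have hintu : (∫ τ, u τ ∂μ) = (∫ τ in (0:ℝ)..(2 * π), u τ) := by
    rw [intervalIntegral.integral_of_le hπ.le]
  have hu2 : (∫ τ in (0:ℝ)..(2 * π), u τ)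
      = 2 * π - ∫ τ in (0:ℝ)..(2 * π), ‖φ (circleMap z r τ)‖ := by
    rw [hu]
    rw [intervalIntegral.integral_sub (intervalIntegrable_const (c := (1:ℝ)))
      (hφc.norm.intervalIntegrable _ _)]
    simp
  have havg_le : (⨍ τ, u τ ∂μ) ≤ 1 - ‖φ z‖ := by
    rw [average_eq, htoReal, smul_eq_mul, hintu, hu2]
    rw [inv_mul_le_iff₀ hπ]
    have h1 : 2 * π * (1 - ‖φ z‖) = 2 * π - 2 * π * ‖φ z‖ := by ring
    rw [h1]
    linarith
  have havg_nonneg : (0:ℝ) ≤ ⨍ τ, u τ ∂μ := by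
    rw [average_eq, htoReal, smul_eq_mul]
    have h0 : (0:ℝ) ≤ ∫ τ, u τ ∂μ :=
      integral_nonneg fun τ => show (0:ℝ) ≤ u τ by linarith [(humem τ).1, hM1]
    exact mul_nonneg (by positivity) h0
  have hmono2 : ω (⨍ τ, u τ ∂μ) ≤ ω (1 - ‖φ z‖) := by
    apply hmono havg_nonneg
    · rw [Set.mem_Ici]
      have := hmaps z hz
      rw [mem_ball, dist_zero_right] at this
      linarith
    · exact havg_le
  -- assemble
  have hLHS : (1 / (2 * π)) *
      (∫ τ in (0:ℝ)..(2 * π), ω (1 - ‖φ (z + (r : ℂ) * Complex.exp (τ * Complex.I))‖))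
      = ⨍ τ, ω (u τ) ∂μ := by
    rw [average_eq, htoReal, smul_eq_mul, one_div]
    congr 1
    rw [← intervalIntegral.integral_of_le hπ.le]
    apply intervalIntegral.integral_congr
    intro τ _
    simp only [hu, circleMap]
  rw [hLHS]
  exact hJ.trans hmono2
end

section
/- Let K ≥ 1 and let f be a harmonic K-quasiregular mapping of 𝔻 into ℂ. Then for every z ∈ 𝔻 and every δ with 0 < δ < 1 - |z|, one has 𝓜_f(z) ≤ 2K(M_{z,δ} - |f(z)|)/δ, where M_{z,δ} = sup{|f(w)| : |w - z| < δ}. -/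
open Metric ComplexConjugate

lemma halfplane_deriv_bound (B : ℂ → ℂ) (z : ℂ) (δ : ℝ) (hδ : 0 < δ)
    (hd : DifferentiableOn ℂ B (ball z δ))
    (hre : ∀ w ∈ ball z δ, 0 < (B w).re) :
    ‖deriv B z‖ ≤ 2 * (B z).re / δ := by
  set a : ℂ := B z with ha
  have haz : 0 < a.re := hre z (mem_ball_self hδ)
  set G : ℂ → ℂ := fun w => (B w - a) / (B w + conj a) with hG
  have hden : ∀ w ∈ ball z δ, B w + conj a ≠ 0 := by
    intro w hw
    have hpos : 0 < (B w + conj a).re := by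
      simp only [Complex.add_re, Complex.conj_re]
      linarith [hre w hw]
    intro hcon
    rw [hcon] at hpos; simp at hpos
  have hGd : DifferentiableOn ℂ G (ball z δ) :=
    (hd.sub (differentiableOn_const a)).div (hd.add (differentiableOn_const _)) hden
  have hGz : G z = 0 := by simp [hG, ha]
  have hmaps : Set.MapsTo G (ball z δ) (ball (G z) 1) := by
    intro w hw
    rw [hGz, mem_ball, dist_zero_right, hG]
    have hdpos : (0:ℝ) < ‖B w + conj a‖ := norm_pos_iff.mpr (hden w hw)
    simp only [norm_div]
    rw [div_lt_one hdpos]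
    have hsq : Complex.normSq (B w - a) < Complex.normSq (B w + conj a) := by
      simp only [Complex.normSq_apply, Complex.sub_re, Complex.sub_im, Complex.add_re,
        Complex.add_im, Complex.conj_re, Complex.conj_im]
      nlinarith [hre w hw, haz]
    have h1 : ‖B w - a‖ = Real.sqrt (Complex.normSq (B w - a)) := by
      rw [Complex.norm_def]
    have h2 : ‖B w + conj a‖ = Real.sqrt (Complex.normSq (B w + conj a)) := by
      rw [Complex.norm_def]
    rw [h1, h2]
    exact Real.sqrt_lt_sqrt (Complex.normSq_nonneg _) hsq
  have hder : ‖deriv G z‖ ≤ 1 / δ :=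
    Complex.norm_deriv_le_div_of_mapsTo_ball hGd (hmaps.mono_right ball_subset_closedBall) hδ
  have hBz : DifferentiableAt ℂ B z :=
    hd.differentiableAt (isOpen_ball.mem_nhds (mem_ball_self hδ))
  have hB' : HasDerivAt B (deriv B z) z := hBz.hasDerivAt
  have hne : B z + conj a ≠ 0 := hden z (mem_ball_self hδ)
  have hGder : HasDerivAt G
      ((deriv B z * (B z + conj a) - (B z - a) * deriv B z) / (B z + conj a) ^ 2) z :=
    (hB'.sub_const a).div (hB'.add_const (conj a)) hne
  have hre2 : (0:ℝ) < 2 * a.re := by linarith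
  have hc2 : ((2 * a.re : ℝ) : ℂ) ≠ 0 := by
    simp only [ne_eq, Complex.ofReal_eq_zero]; linarith
  have haca : a + conj a = ((2 * a.re : ℝ) : ℂ) := by
    exact Complex.add_conj a
  have hGval : deriv G z = deriv B z / ((2 * a.re : ℝ) : ℂ) := by
    rw [hGder.deriv, ← ha, sub_self, zero_mul, sub_zero, haca, pow_two,
      mul_div_mul_right _ _ hc2]
  have hnormG : ‖deriv G z‖ = ‖deriv B z‖ / (2 * a.re) := by
    rw [hGval, norm_div, Complex.norm_real, Real.norm_eq_abs, abs_of_pos hre2]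
  rw [hnormG] at hder
  rw [div_le_div_iff₀ hre2 hδ] at hder
  rw [le_div_iff₀ hδ]
  linarith

theorem stmt7 (K : ℝ) (hK : 1 ≤ K) (h g : ℂ → ℂ)
    (hh : DifferentiableOn ℂ h (ball (0:ℂ) 1))
    (hg : DifferentiableOn ℂ g (ball (0:ℂ) 1))
    (hJ : ∀ z ∈ ball (0:ℂ) 1, ‖deriv g z‖ < ‖deriv h z‖)
    (hqr : ∀ z ∈ ball (0:ℂ) 1,
      (‖deriv h z‖ + ‖deriv g z‖) ^ 2 ≤ K * (‖deriv h z‖ ^ 2 - ‖deriv g z‖ ^ 2)) :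
    ∀ z ∈ ball (0:ℂ) 1, ∀ δ : ℝ, 0 < δ → δ < 1 - ‖z‖ →
      ‖deriv h z‖ + ‖deriv g z‖ ≤
        2 * K * (sSup ((fun w => ‖h w + conj (g w)‖) '' ball z δ)
          - ‖h z + conj (g z)‖) / δ := by
  intro z hz δ hδ hδ1
  set f : ℂ → ℂ := fun w => h w + conj (g w) with hf
  show ‖deriv h z‖ + ‖deriv g z‖ ≤
    2 * K * (sSup ((fun w => ‖f w‖) '' ball z δ) - ‖f z‖) / δ
  have hzn : ‖z‖ < 1 := mem_ball_zero_iff.mp hz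
  have hsubc : closedBall z δ ⊆ ball (0:ℂ) 1 := by
    intro w hw
    rw [mem_closedBall, dist_eq_norm] at hw
    rw [mem_ball_zero_iff]
    calc ‖w‖ = ‖(w - z) + z‖ := by ring_nf
      _ ≤ ‖w - z‖ + ‖z‖ := norm_add_le _ _
      _ ≤ δ + ‖z‖ := by linarith
      _ < 1 := by linarith
  have hsub : ball z δ ⊆ ball (0:ℂ) 1 :=
    (ball_subset_closedBall).trans hsubc
  have hfc : ContinuousOn f (ball (0:ℂ) 1) :=
    hh.continuousOn.add (Complex.continuous_conj.comp_continuousOn hg.continuousOn)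
  have hbdd : BddAbove ((fun w => ‖f w‖) '' ball z δ) := by
    have hcomp : BddAbove ((fun w => ‖f w‖) '' closedBall z δ) :=
      ((isCompact_closedBall z δ).image_of_continuousOn
        ((hfc.mono hsubc).norm)).bddAbove
    exact hcomp.mono (Set.image_mono ball_subset_closedBall)
  set M := sSup ((fun w => ‖f w‖) '' ball z δ) with hM
  have hfzM : ‖f z‖ ≤ M := le_csSup hbdd ⟨z, mem_ball_self hδ, rfl⟩
  have hfwM : ∀ w ∈ ball z δ, ‖f w‖ ≤ M := fun w hw => le_csSup hbdd ⟨w, hw, rfl⟩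
  set c : ℂ := if f z = 0 then 1 else conj (f z) / (‖f z‖ : ℂ) with hc
  have hcn : ‖c‖ = 1 := by
    rw [hc]; split_ifs with h0
    · simp
    · have hfz0 : (0:ℝ) < ‖f z‖ := norm_pos_iff.mpr h0
      rw [norm_div, RCLike.norm_conj, Complex.norm_real, Real.norm_eq_abs,
        abs_of_pos hfz0, div_self hfz0.ne']
  have hcf : c * f z = (‖f z‖ : ℂ) := by
    rw [hc]; split_ifs with h0
    · simp [h0]
    · have hfz0 : (‖f z‖ : ℂ) ≠ 0 := by
        simp only [ne_eq, Complex.ofReal_eq_zero]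
        exact (norm_pos_iff.mpr h0).ne'
      rw [div_mul_eq_mul_div, mul_comm, Complex.mul_conj, div_eq_iff hfz0]
      rw [Complex.normSq_eq_norm_sq]
      push_cast
      ring
  have hreA : ∀ w, (c * h w + conj c * g w).re = (c * f w).re := by
    intro w
    have e0 : c * conj (g w) = conj (conj c * g w) := by simp [map_mul]
    have e1 : c * f w = c * h w + c * conj (g w) := by rw [hf]; ring
    rw [e1, Complex.add_re, Complex.add_re, e0, Complex.conj_re]
  have key : ∀ ε : ℝ, 0 < ε →
      ‖deriv h z‖ + ‖deriv g z‖ ≤ 2 * K * (M - ‖f z‖) / δ + 2 * K * ε / δ := by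
    intro ε hε
    set A : ℂ → ℂ := fun w => c * h w + conj c * g w with hA
    set B : ℂ → ℂ := fun w => ((M + ε : ℝ) : ℂ) - A w with hB
    have hAd : DifferentiableOn ℂ A (ball z δ) :=
      ((hh.mono hsub).const_mul c).add ((hg.mono hsub).const_mul (conj c))
    have hBd : DifferentiableOn ℂ B (ball z δ) :=
      (differentiableOn_const _).sub hAd
    have hBre : ∀ w ∈ ball z δ, 0 < (B w).re := by
      intro w hw
      have h1 : (A w).re ≤ ‖f w‖ := by
        rw [hA]
        calc (c * h w + conj c * g w).re = (c * f w).re := hreA w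
          _ ≤ ‖c * f w‖ := Complex.re_le_norm _
          _ = ‖f w‖ := by rw [norm_mul, hcn, one_mul]
      have h2 := hfwM w hw
      simp only [hB, Complex.sub_re, Complex.ofReal_re]
      linarith
    have hbound := halfplane_deriv_bound B z δ hδ hBd hBre
    have hBzre : (B z).re = M + ε - ‖f z‖ := by
      have : (A z).re = ‖f z‖ := by
        rw [hA, hreA z, hcf, Complex.ofReal_re]
      simp only [hB, Complex.sub_re, Complex.ofReal_re, this]
    have hh' : HasDerivAt h (deriv h z) z :=
      (hh.differentiableAt (isOpen_ball.mem_nhds hz)).hasDerivAt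
    have hg' : HasDerivAt g (deriv g z) z :=
      (hg.differentiableAt (isOpen_ball.mem_nhds hz)).hasDerivAt
    have hAd' : HasDerivAt A (c * deriv h z + conj c * deriv g z) z :=
      (hh'.const_mul c).add (hg'.const_mul (conj c))
    have hBd' : HasDerivAt B (-(c * deriv h z + conj c * deriv g z)) z :=
      hAd'.const_sub _
    have hBderiv : deriv B z = -(c * deriv h z + conj c * deriv g z) := hBd'.deriv
    have hlow : ‖deriv h z‖ - ‖deriv g z‖ ≤ ‖deriv B z‖ := by
      rw [hBderiv, norm_neg]
      have e2 : ‖c * deriv h z‖ = ‖deriv h z‖ := by rw [norm_mul, hcn, one_mul]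
      have e3 : ‖conj c * deriv g z‖ = ‖deriv g z‖ := by
        rw [norm_mul, RCLike.norm_conj, hcn, one_mul]
      have := norm_sub_norm_le (c * deriv h z) (-(conj c * deriv g z))
      rw [sub_neg_eq_add, norm_neg] at this
      linarith [this, e2.ge, e3.le]
    have hJz := hJ z hz
    have hq := hqr z hz
    have hstep : ‖deriv h z‖ + ‖deriv g z‖ ≤ K * (‖deriv h z‖ - ‖deriv g z‖) := by
      nlinarith [norm_nonneg (deriv g z), norm_nonneg (deriv h z)]
    have hK0 : (0:ℝ) ≤ K := by linarith
    calc ‖deriv h z‖ + ‖deriv g z‖ ≤ K * (‖deriv h z‖ - ‖deriv g z‖) := hstep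
      _ ≤ K * ‖deriv B z‖ := mul_le_mul_of_nonneg_left hlow hK0
      _ ≤ K * (2 * (B z).re / δ) := mul_le_mul_of_nonneg_left hbound hK0
      _ = 2 * K * (M - ‖f z‖) / δ + 2 * K * ε / δ := by
        rw [hBzre]; field_simp; ring
  apply le_of_forall_pos_le_add
  intro ε hε
  have hK0 : (0:ℝ) < K := by linarith
  have hεδ : 0 < ε * δ / (2 * K) := by positivity
  have := key (ε * δ / (2 * K)) hεδ
  have heq : 2 * K * (ε * δ / (2 * K)) / δ = ε := by field_simp
  linarith [this, heq.le, heq.ge]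
end

section
/- Let p ≥ 1, K ≥ 1, z ∈ 𝔻, and 0 < ε < 1 - |z|. Let f be a harmonic K-quasiregular mapping of 𝔻 into ℂ. Then there is a constant M depending only on p and K (one may take M = 4^{p+1} K^p) such that 𝓜_f(z)^p ≤ (M/ε^{p+2}) · ∫_{𝔻(z,ε)} max(|f(w)| - |f(z)|, 0)^p dm(w), where dm is Lebesgue area measure divided by π. -/
open Metric ComplexConjugate Real MeasureTheory intervalIntegral Set


lemma iconj (f : ℝ → ℂ) (a b : ℝ) : ∫ x in a..b, conj (f x) = conj (∫ x in a..b, f x) := by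
  rw [intervalIntegral_eq_integral_uIoc, intervalIntegral_eq_integral_uIoc, integral_conj]
  split_ifs <;> simp

lemma ire (f : ℝ → ℂ) (a b : ℝ) (hf : IntervalIntegrable f volume a b) :
    (∫ x in a..b, f x).re = ∫ x in a..b, (f x).re := by
  simpa using (Complex.reCLM.intervalIntegral_comp_comm hf).symm

lemma meanvalue {F : ℂ → ℂ} {z : ℂ} {r : ℝ} (hr : 0 < r) (hF : DiffContOnCl ℂ F (ball z r)) :
    ∫ θ in (0:ℝ)..(2*π), F (circleMap z r θ) = (2*π : ℝ) • F z := by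
  have key := hF.circleIntegral_sub_inv_smul (mem_ball_self hr)
  rw [circleIntegral] at key
  have h1 : ∀ θ : ℝ, deriv (circleMap z r) θ • (circleMap z r θ - z)⁻¹ • F (circleMap z r θ)
      = Complex.I * F (circleMap z r θ) := by
    intro θ
    rw [deriv_circleMap, circleMap_sub_center, smul_eq_mul, smul_eq_mul]
    have h0 : circleMap 0 r θ ≠ 0 := by
      simpa using circleMap_ne_center (c := (0:ℂ)) hr.ne' (θ := θ)
    field_simp
  simp_rw [h1, intervalIntegral.integral_const_mul] at key
  apply mul_left_cancel₀ Complex.I_ne_zero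
  rw [key, Complex.real_smul, smul_eq_mul]
  push_cast
  ring

lemma polar {F : ℂ → ℝ} {z : ℂ} {ε : ℝ} (hε : 0 < ε) (hF : ContinuousOn F (closedBall z ε)) :
    IntegrableOn (fun r => r * ∫ θ in (0:ℝ)..(2*π), F (circleMap z r θ)) (Ioo 0 ε) ∧
    ∫ w in ball z ε, F w = ∫ r in Ioo (0:ℝ) ε, r * ∫ θ in (0:ℝ)..(2*π), F (circleMap z r θ) := by
  set G : ℂ → ℝ := fun w => F (z + w) with hGdef
  have hG : ContinuousOn G (closedBall 0 ε) := by
    apply hF.comp (by fun_prop)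
    intro w hw
    simpa [mem_closedBall, dist_eq_norm] using mem_closedBall_zero_iff.mp hw
  -- step 2 : translation
  have step2 : ∫ w in ball z ε, F w = ∫ w in ball 0 ε, G w := by
    rw [← MeasureTheory.integral_indicator measurableSet_ball,
      ← MeasureTheory.integral_indicator measurableSet_ball,
      ← integral_add_left_eq_self (fun w => indicator (ball z ε) F w) z]
    congr 1
    funext w
    by_cases hw : w ∈ ball 0 ε
    · have : z + w ∈ ball z ε := by simpa [mem_ball, dist_eq_norm] using mem_ball_zero_iff.mp hw
      simp [indicator_of_mem this, indicator_of_mem hw, hGdef]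
    · have : z + w ∉ ball z ε := by
        simpa [mem_ball, dist_eq_norm] using fun hc => hw (mem_ball_zero_iff.mpr hc)
      simp [indicator_of_notMem this, indicator_of_notMem hw]
  -- step 3-4
  set S : Set (ℝ × ℝ) := Ioo (0:ℝ) ε ×ˢ Ioo (-π) π with hSdef
  have habs : ∀ p : ℝ × ℝ, ‖Complex.polarCoord.symm p‖ = |p.1| := fun p =>
    Complex.norm_polarCoord_symm p
  have step34 : ∫ w in ball 0 ε, G w = ∫ p in S, p.1 • G (Complex.polarCoord.symm p) := by
    rw [← MeasureTheory.integral_indicator measurableSet_ball, ← Complex.integral_comp_polarCoord_symm]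
    rw [← MeasureTheory.integral_indicator (polarCoord.open_target.measurableSet),
      ← MeasureTheory.integral_indicator (by measurability : MeasurableSet S)]
    congr 1
    funext p
    rw [show polarCoord.target = Ioi (0:ℝ) ×ˢ Ioo (-π) π from rfl]
    by_cases hp : p ∈ S
    · obtain ⟨⟨h1, h2⟩, h3⟩ := id hp
      have hmem : p ∈ Ioi (0:ℝ) ×ˢ Ioo (-π) π := ⟨h1, h3⟩
      have hb : Complex.polarCoord.symm p ∈ ball (0:ℂ) ε := by
        rw [mem_ball_zero_iff, habs, abs_of_pos h1]; exact h2
      rw [indicator_of_mem hmem, indicator_of_mem hp, indicator_of_mem hb]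
    · by_cases hmem : p ∈ Ioi (0:ℝ) ×ˢ Ioo (-π) π
      · have h1 : (0:ℝ) < p.1 := hmem.1
        have hge : ε ≤ p.1 := by
          by_contra hc
          exact hp ⟨⟨h1, not_le.mp hc⟩, hmem.2⟩
        have hb : Complex.polarCoord.symm p ∉ ball (0:ℂ) ε := by
          rw [mem_ball_zero_iff, habs, abs_of_pos h1]
          exact not_lt.mpr hge
        rw [indicator_of_mem hmem, indicator_of_notMem hp, indicator_of_notMem hb, smul_zero]
      · rw [indicator_of_notMem hmem, indicator_of_notMem hp]
  -- step 5 : integrability on S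
  have hsc : Continuous fun p : ℝ × ℝ => Complex.polarCoord.symm p := by
    simp only [Complex.polarCoord_symm_apply]
    fun_prop
  have hKc : IsCompact (Icc (0:ℝ) ε ×ˢ Icc (-π) π) := isCompact_Icc.prod isCompact_Icc
  have hcont : ContinuousOn (fun p : ℝ × ℝ => p.1 • G (Complex.polarCoord.symm p))
      (Icc (0:ℝ) ε ×ˢ Icc (-π) π) := by
    apply (continuous_fst.continuousOn).smul
    apply hG.comp hsc.continuousOn
    intro p hp
    rw [mem_closedBall_zero_iff, habs, abs_le]
    constructor
    · linarith [hp.1.1, hε.le]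
    · exact hp.1.2
  have hIntS : IntegrableOn (fun p : ℝ × ℝ => p.1 • G (Complex.polarCoord.symm p)) S := by
    apply (hcont.integrableOn_compact hKc).mono_set
    exact Set.prod_mono Ioo_subset_Icc_self Ioo_subset_Icc_self
  -- step 7 prep : inner integral identity
  have inner_eq : ∀ r : ℝ, (∫ θ in Ioo (-π) π, r • G (Complex.polarCoord.symm (r, θ)))
      = r * ∫ θ in (0:ℝ)..(2*π), F (circleMap z r θ) := by
    intro r
    have hsymm : ∀ θ : ℝ, Complex.polarCoord.symm (r, θ) = circleMap 0 r θ := by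
      intro θ
      simp only [Complex.polarCoord_symm_apply, circleMap, Complex.exp_mul_I, zero_add,
        ← Complex.ofReal_cos, ← Complex.ofReal_sin]
    have hper : Function.Periodic (fun θ : ℝ => r • G (Complex.polarCoord.symm (r, θ))) (2*π) := by
      intro θ
      simp [Complex.polarCoord_symm_apply, Real.cos_add_two_pi, Real.sin_add_two_pi]
    calc (∫ θ in Ioo (-π) π, r • G (Complex.polarCoord.symm (r, θ)))
        = ∫ θ in Ioc (-π) π, r • G (Complex.polarCoord.symm (r, θ)) :=
          (integral_Ioc_eq_integral_Ioo).symm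
      _ = ∫ θ in (-π)..π, r • G (Complex.polarCoord.symm (r, θ)) := by
          rw [integral_of_le (by linarith [Real.pi_pos])]
      _ = ∫ θ in (0:ℝ)..(2*π), r • G (Complex.polarCoord.symm (r, θ)) := by
          have := hper.intervalIntegral_add_eq (-π) 0
          simpa [neg_add_cancel, show -π + 2*π = π by ring] using this
      _ = r * ∫ θ in (0:ℝ)..(2*π), F (circleMap z r θ) := by
          rw [← intervalIntegral.integral_const_mul]
          congr 1
          funext θ
          rw [hsymm θ, smul_eq_mul, hGdef]
          congr 2
          simp [circleMap]
  -- Fubini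
  have hprod : (volume : Measure (ℝ × ℝ)) = (volume : Measure ℝ).prod volume :=
    (Measure.volume_eq_prod ℝ ℝ)
  have fub : ∫ p in S, p.1 • G (Complex.polarCoord.symm p)
      = ∫ r in Ioo (0:ℝ) ε, ∫ θ in Ioo (-π) π, r • G (Complex.polarCoord.symm (r, θ)) := by
    rw [hSdef]
    rw [show (volume : Measure (ℝ × ℝ)) = (volume : Measure ℝ).prod volume from hprod]
    exact setIntegral_prod _ (by rw [← hprod]; exact hIntS)
  have hIntOut : IntegrableOn (fun r => r * ∫ θ in (0:ℝ)..(2*π), F (circleMap z r θ))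
      (Ioo 0 ε) := by
    have h1 : Integrable (fun p : ℝ × ℝ => p.1 • G (Complex.polarCoord.symm p))
        ((volume.restrict (Ioo (0:ℝ) ε)).prod (volume.restrict (Ioo (-π) π))) := by
      rw [Measure.prod_restrict, ← hprod]
      exact hIntS
    have h2 := h1.integral_prod_left
    simp only [inner_eq] at h2
    exact h2
  refine ⟨hIntOut, ?_⟩
  rw [step2, step34, fub]
  congr 1
  funext r
  exact inner_eq r

lemma holder_step {p : ℝ} (hp : 1 ≤ p) {a W : ℝ → ℝ} (ha : Continuous a) (hWc : Continuous W)
    (ha0 : ∀ x, 0 ≤ a x) (hW0 : ∀ x, 0 ≤ W x) (hW2 : ∀ x, W x ≤ 2)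
    (hWint : ∫ x in Ioc (0:ℝ) (2*π), W x = 2*π) :
    (∫ x in Ioc (0:ℝ) (2*π), a x * W x) ^ p
      ≤ 2 * (2*π)^(p-1) * ∫ x in Ioc (0:ℝ) (2*π), a x ^ p := by
  have h2pi : (0:ℝ) < 2*π := by positivity
  have haW_le : ∫ x in Ioc (0:ℝ) (2*π), a x ^ p * W x ≤ 2 * ∫ x in Ioc (0:ℝ) (2*π), a x ^ p := by
    rw [← MeasureTheory.integral_const_mul]
    apply setIntegral_mono_on
    · apply ((ha.rpow_const (fun x => Or.inr (by linarith))).mul hWc).integrableOn_Icc.mono_set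
        Ioc_subset_Icc_self
    · exact ((Continuous.mul continuous_const
        (ha.rpow_const (fun x => Or.inr (by linarith)))).integrableOn_Icc).mono_set
        Ioc_subset_Icc_self
    · exact measurableSet_Ioc
    · intro x _
      have : a x ^ p * W x ≤ a x ^ p * 2 :=
        mul_le_mul_of_nonneg_left (hW2 x) (Real.rpow_nonneg (ha0 x) p)
      linarith
  have hapW_nonneg : 0 ≤ ∫ x in Ioc (0:ℝ) (2*π), a x ^ p * W x :=
    setIntegral_nonneg measurableSet_Ioc fun x _ =>
      mul_nonneg (Real.rpow_nonneg (ha0 x) p) (hW0 x)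
  have hap_nonneg : 0 ≤ ∫ x in Ioc (0:ℝ) (2*π), a x ^ p :=
    setIntegral_nonneg measurableSet_Ioc fun x _ => Real.rpow_nonneg (ha0 x) p
  rcases eq_or_lt_of_le hp with hp1 | hp1
  · -- p = 1
    subst hp1
    simp only [Real.rpow_one] at haW_le ⊢
    simp only [sub_self, Real.rpow_zero, mul_one]
    linarith [haW_le]
  · set q : ℝ := p / (p - 1) with hqdef
    have hpq : p.HolderConjugate q := Real.HolderConjugate.conjExponent hp1
    have hp0 : p ≠ 0 := hpq.ne_zero
    have hq0 : q ≠ 0 := hpq.symm.ne_zero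
    set μ : Measure ℝ := volume.restrict (Ioc (0:ℝ) (2*π)) with hμdef
    have hfin : IsFiniteMeasure μ := by
      constructor
      rw [hμdef, Measure.restrict_apply_univ]
      exact measure_Ioc_lt_top
    set f : ℝ → ℝ := fun x => a x * W x ^ (1/p) with hfdef
    set gq : ℝ → ℝ := fun x => W x ^ (1/q) with hgdef
    have hfc : Continuous f := ha.mul (hWc.rpow_const fun x => Or.inr hpq.one_div_nonneg)
    have hgc : Continuous gq := hWc.rpow_const fun x => Or.inr hpq.symm.one_div_nonneg
    -- bounds
    obtain ⟨C, hC⟩ := (isCompact_Icc (a := (0:ℝ)) (b := 2*π)).exists_bound_of_continuousOn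
      ha.continuousOn
    have hWp_le : ∀ x, W x ^ (1/p) ≤ 2 := by
      intro x
      calc W x ^ (1/p) ≤ 2 ^ (1/p) :=
            Real.rpow_le_rpow (hW0 x) (hW2 x) hpq.one_div_nonneg
        _ ≤ 2 ^ (1:ℝ) := Real.rpow_le_rpow_of_exponent_le one_le_two
            (by rw [div_le_one (by linarith)]; linarith)
        _ = 2 := by norm_num
    have hWq_le : ∀ x, W x ^ (1/q) ≤ 2 := by
      intro x
      calc W x ^ (1/q) ≤ 2 ^ (1/q) :=
            Real.rpow_le_rpow (hW0 x) (hW2 x) hpq.symm.one_div_nonneg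
        _ ≤ 2 ^ (1:ℝ) := Real.rpow_le_rpow_of_exponent_le one_le_two
            (by rw [div_le_one hpq.symm.pos]; linarith [hpq.symm.lt])
        _ = 2 := by norm_num
    have hmf : MemLp f (ENNReal.ofReal p) μ := by
      apply MemLp.of_bound hfc.aestronglyMeasurable (C * 2)
      rw [hμdef]
      filter_upwards [ae_restrict_mem measurableSet_Ioc] with x hx
      have hxI : x ∈ Icc (0:ℝ) (2*π) := Ioc_subset_Icc_self hx
      have h1 : |a x| ≤ C := by simpa using hC x hxI
      rw [hfdef]
      simp only [Real.norm_eq_abs]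
      rw [abs_mul, abs_of_nonneg (Real.rpow_nonneg (hW0 x) _)]
      apply mul_le_mul h1 (hWp_le x) (Real.rpow_nonneg (hW0 x) _) (le_trans (abs_nonneg _) h1)
    have hmg : MemLp gq (ENNReal.ofReal q) μ := by
      apply MemLp.of_bound hgc.aestronglyMeasurable 2
      apply Filter.Eventually.of_forall
      intro x
      rw [hgdef]
      simp only [Real.norm_eq_abs]
      rw [abs_of_nonneg (Real.rpow_nonneg (hW0 x) _)]
      exact hWq_le x
    have hkey := integral_mul_le_Lp_mul_Lq_of_nonneg hpq
      (Filter.Eventually.of_forall fun x => mul_nonneg (ha0 x) (Real.rpow_nonneg (hW0 x) _))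
      (Filter.Eventually.of_forall fun x => Real.rpow_nonneg (hW0 x) _) hmf hmg
    -- rewrite the three integrals
    have e1 : ∀ x, f x * gq x = a x * W x := by
      intro x
      rw [hfdef, hgdef]
      have hsum : 1/p + 1/q = 1 := by
        rw [one_div, one_div]; exact hpq.inv_add_inv_eq_one
      have : W x ^ (1/p) * W x ^ (1/q) = W x := by
        rw [← Real.rpow_add' (hW0 x) (by rw [hsum]; norm_num), hsum, Real.rpow_one]
      rw [mul_assoc, this]
    have e2 : ∀ x, f x ^ p = a x ^ p * W x := by
      intro x
      rw [hfdef]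
      rw [Real.mul_rpow (ha0 x) (Real.rpow_nonneg (hW0 x) _)]
      congr 1
      rw [← Real.rpow_mul (hW0 x), one_div, inv_mul_cancel₀ hp0, Real.rpow_one]
    have e3 : ∀ x, gq x ^ q = W x := by
      intro x
      rw [hgdef, ← Real.rpow_mul (hW0 x), one_div, inv_mul_cancel₀ hq0, Real.rpow_one]
    simp only [hfdef, hgdef] at e1 e2 e3
    simp only [e1, e2, e3] at hkey
    rw [hWint] at hkey
    -- now raise to power p
    have hle : ∫ x in Ioc (0:ℝ) (2*π), a x * W x
        ≤ (∫ x in Ioc (0:ℝ) (2*π), a x ^ p * W x) ^ (1/p) * (2*π) ^ (1/q) := hkey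
    have hnn : (0:ℝ) ≤ (∫ x in Ioc (0:ℝ) (2*π), a x ^ p * W x) ^ (1/p) * (2*π) ^ (1/q) := by
      positivity
    have hint_nonneg : 0 ≤ ∫ x in Ioc (0:ℝ) (2*π), a x * W x :=
      setIntegral_nonneg measurableSet_Ioc fun x _ => mul_nonneg (ha0 x) (hW0 x)
    calc (∫ x in Ioc (0:ℝ) (2*π), a x * W x) ^ p
        ≤ ((∫ x in Ioc (0:ℝ) (2*π), a x ^ p * W x) ^ (1/p) * (2*π) ^ (1/q)) ^ p :=
          Real.rpow_le_rpow hint_nonneg hle (by linarith)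
      _ = (∫ x in Ioc (0:ℝ) (2*π), a x ^ p * W x) * (2*π) ^ (p-1) := by
          rw [Real.mul_rpow (by positivity) (by positivity)]
          congr 1
          · rw [← Real.rpow_mul hapW_nonneg, one_div, inv_mul_cancel₀ hp0, Real.rpow_one]
          · rw [← Real.rpow_mul h2pi.le]
            congr 1
            rw [show 1/q*p = p/q from by ring]
            exact hpq.div_conj_eq_sub_one
      _ ≤ (2 * ∫ x in Ioc (0:ℝ) (2*π), a x ^ p) * (2*π) ^ (p-1) := by
          apply mul_le_mul_of_nonneg_right haW_le (by positivity)
      _ = 2 * (2*π)^(p-1) * ∫ x in Ioc (0:ℝ) (2*π), a x ^ p := by ring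


theorem stmt8 (p K : ℝ) (hp : 1 ≤ p) (hK : 1 ≤ K) (h g : ℂ → ℂ)
    (hh : DifferentiableOn ℂ h (ball (0:ℂ) 1))
    (hg : DifferentiableOn ℂ g (ball (0:ℂ) 1))
    (hJ : ∀ z ∈ ball (0:ℂ) 1, ‖deriv g z‖ < ‖deriv h z‖)
    (hqr : ∀ z ∈ ball (0:ℂ) 1,
      (‖deriv h z‖ + ‖deriv g z‖) ^ 2 ≤ K * (‖deriv h z‖ ^ 2 - ‖deriv g z‖ ^ 2))
    (z : ℂ) (hz : z ∈ ball (0:ℂ) 1) (ε : ℝ) (hε : 0 < ε) (hε1 : ε < 1 - ‖z‖) :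
    (‖deriv h z‖ + ‖deriv g z‖) ^ p ≤
      ((4:ℝ) ^ (p + 1) * K ^ p / ε ^ (p + 2)) *
        ((1 / π) * ∫ w in ball z ε,
          (max (‖h w + conj (g w)‖ - ‖h z + conj (g z)‖) 0) ^ p ∂volume) := by
  have hπ : (0:ℝ) < π := Real.pi_pos
  have h2π : (0:ℝ) < 2*π := by positivity
  have hz1 : ‖z‖ < 1 := mem_ball_zero_iff.mp hz
  set c : ℂ := h z + conj (g z) with hcdef
  -- unimodular u with (conj u * c).re = ‖c‖
  obtain ⟨u, hu1, hucre⟩ : ∃ u : ℂ, ‖u‖ = 1 ∧ (conj u * c).re = ‖c‖ := by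
    by_cases hc : c = 0
    · exact ⟨1, by simp, by simp [hc]⟩
    · refine ⟨(‖c‖:ℂ)⁻¹ * c, ?_, ?_⟩
      · rw [norm_mul, norm_inv, Complex.norm_real, Real.norm_eq_abs, abs_of_nonneg (norm_nonneg c),
          inv_mul_cancel₀ (norm_ne_zero_iff.mpr hc)]
      · have hcn : (‖c‖:ℝ) ≠ 0 := norm_ne_zero_iff.mpr hc
        have hcc : conj c * c = ((‖c‖^2 : ℝ) : ℂ) := by
          rw [mul_comm, Complex.mul_conj, Complex.normSq_eq_norm_sq]
        have : conj ((‖c‖:ℂ)⁻¹ * c) * c = ((‖c‖:ℝ):ℂ) := by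
          rw [map_mul, map_inv₀, Complex.conj_ofReal, mul_assoc, hcc]
          rw [show ((‖c‖^2:ℝ):ℂ) = (‖c‖:ℂ) * (‖c‖:ℂ) by push_cast; ring]
          rw [inv_mul_cancel_left₀ (by exact_mod_cast hcn)]
        rw [this, Complex.ofReal_re]
  -- the holomorphic function φ and its derivative at z
  set φ : ℂ → ℂ := fun w => conj u * h w + u * g w with hφdef
  have hφd : DifferentiableOn ℂ φ (ball (0:ℂ) 1) := by
    apply DifferentiableOn.add
    · exact (differentiableOn_const _).mul hh
    · exact (differentiableOn_const _).mul hg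
  have hφc : ContinuousOn φ (ball (0:ℂ) 1) := hφd.continuousOn
  have hhz : DifferentiableAt ℂ h z := (hh.differentiableAt (isOpen_ball.mem_nhds hz))
  have hgz : DifferentiableAt ℂ g z := (hg.differentiableAt (isOpen_ball.mem_nhds hz))
  set d : ℂ := conj u * deriv h z + u * deriv g z with hddef
  have hder : deriv φ z = d := by
    have h1 : HasDerivAt h (deriv h z) z := hhz.hasDerivAt
    have h2 : HasDerivAt g (deriv g z) z := hgz.hasDerivAt
    exact ((h1.const_mul (conj u)).add (h2.const_mul u)).deriv
  have hdlow : ‖deriv h z‖ - ‖deriv g z‖ ≤ ‖d‖ := by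
    have h1 := norm_sub_norm_le (conj u * deriv h z) (-(u * deriv g z))
    rw [sub_neg_eq_add, norm_neg, norm_mul, norm_mul, RCLike.norm_conj, hu1, one_mul, one_mul]
      at h1
    exact h1
  have hd0 : 0 < ‖d‖ := lt_of_lt_of_le (sub_pos.mpr (hJ z hz)) hdlow
  have hMd : ‖deriv h z‖ + ‖deriv g z‖ ≤ K * ‖d‖ := by
    have hq := hqr z hz
    have hb0 : 0 ≤ ‖deriv g z‖ := norm_nonneg _
    have hab : ‖deriv g z‖ < ‖deriv h z‖ := hJ z hz
    have hK0 : (0:ℝ) < K := by linarith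
    have hsum : 0 < ‖deriv h z‖ + ‖deriv g z‖ := by linarith
    have h2 : ‖deriv h z‖ + ‖deriv g z‖ ≤ K * (‖deriv h z‖ - ‖deriv g z‖) := by
      nlinarith [hq, hsum]
    calc ‖deriv h z‖ + ‖deriv g z‖ ≤ K * (‖deriv h z‖ - ‖deriv g z‖) := h2
      _ ≤ K * ‖d‖ := mul_le_mul_of_nonneg_left hdlow hK0.le
  -- ψ and t
  set ψ : ℂ → ℂ := fun w => φ w - φ z with hψdef
  have hψd : DifferentiableOn ℂ ψ (ball (0:ℂ) 1) := hφd.sub (differentiableOn_const _)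
  have hψc : ContinuousOn ψ (ball (0:ℂ) 1) := hψd.continuousOn
  set t : ℂ → ℝ := fun w => (ψ w).re with htdef
  have ht_cont : ContinuousOn t (ball (0:ℂ) 1) := Complex.continuous_re.comp_continuousOn hψc
  have hφre : ∀ w, (φ w).re = (conj u * (h w + conj (g w))).re := by
    intro w
    simp only [hφdef, Complex.add_re, Complex.mul_re, Complex.conj_re, Complex.conj_im,
      Complex.add_im, Complex.mul_im]
    ring
  have ht_le : ∀ w, t w ≤ ‖h w + conj (g w)‖ - ‖c‖ := by
    intro w
    have h1 : (φ w).re ≤ ‖h w + conj (g w)‖ := by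
      rw [hφre w]
      calc (conj u * (h w + conj (g w))).re ≤ ‖conj u * (h w + conj (g w))‖ :=
            Complex.re_le_norm _
        _ = ‖h w + conj (g w)‖ := by rw [norm_mul, RCLike.norm_conj, hu1, one_mul]
    have h2 : (φ z).re = ‖c‖ := by rw [hφre z, ← hcdef, hucre]
    have : t w = (φ w).re - (φ z).re := by simp [htdef, hψdef]
    rw [this, h2]
    linarith
  -- lam and W
  set lam : ℂ := (‖d‖:ℂ)⁻¹ * conj d with hlamdef
  have hdC : (‖d‖:ℂ) ≠ 0 := by
    simpa using hd0.ne'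
  have hlamd : lam * d = (‖d‖:ℂ) := by
    have hdd : conj d * d = ((‖d‖^2 : ℝ) : ℂ) := by
      rw [mul_comm, Complex.mul_conj, Complex.normSq_eq_norm_sq]
    rw [hlamdef, mul_assoc, hdd, show ((‖d‖^2:ℝ):ℂ) = (‖d‖:ℂ) * (‖d‖:ℂ) by push_cast; ring,
      inv_mul_cancel_left₀ hdC]
  have hlam1 : ‖lam‖ = 1 := by
    rw [hlamdef, norm_mul, norm_inv, Complex.norm_real, Real.norm_eq_abs,
      abs_of_nonneg (norm_nonneg d), RCLike.norm_conj, inv_mul_cancel₀ hd0.ne']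
  have hcmnorm : ∀ θ : ℝ, ‖circleMap 0 1 θ‖ = 1 := by
    intro θ
    rw [norm_circleMap_zero]
    norm_num
  set W : ℝ → ℝ := fun θ => 1 + (lam * conj (circleMap 0 1 θ)).re with hWdef
  have habsre : ∀ θ : ℝ, |(lam * conj (circleMap 0 1 θ)).re| ≤ 1 := by
    intro θ
    calc |(lam * conj (circleMap 0 1 θ)).re| ≤ ‖lam * conj (circleMap 0 1 θ)‖ := by
          exact Complex.abs_re_le_norm _
      _ = 1 := by rw [norm_mul, hlam1, RCLike.norm_conj, hcmnorm, mul_one]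
  have hW0 : ∀ θ, 0 ≤ W θ := by
    intro θ
    have := (abs_le.mp (habsre θ)).1
    simp only [hWdef]
    linarith
  have hW2 : ∀ θ, W θ ≤ 2 := by
    intro θ
    have := (abs_le.mp (habsre θ)).2
    simp only [hWdef]
    linarith
  have hWc : Continuous W := by
    apply continuous_const.add
    exact Complex.continuous_re.comp (continuous_const.mul
      (Complex.continuous_conj.comp (continuous_circleMap 0 1)))
  have hcm1ne : ∀ θ : ℝ, circleMap 0 1 θ ≠ 0 := fun θ => circleMap_ne_center one_ne_zero
  have hinv : ∀ θ : ℝ, (circleMap 0 1 θ)⁻¹ = conj (circleMap 0 1 θ) := by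
    intro θ
    apply inv_eq_of_mul_eq_one_left
    rw [mul_comm, Complex.mul_conj, Complex.normSq_eq_norm_sq, norm_circleMap_zero]
    norm_num
  have hcm_int : ∫ θ in (0:ℝ)..(2*π), circleMap 0 1 θ = 0 := by
    have hmv := meanvalue (z := (0:ℂ)) (r := 1) one_pos
      (differentiable_id.diffContOnCl (s := ball (0:ℂ) 1))
    simpa using hmv
  have hconjcont : Continuous fun θ : ℝ => conj (circleMap 0 1 θ) :=
    Complex.continuous_conj.comp (continuous_circleMap 0 1)
  have hWint : ∫ θ in Ioc (0:ℝ) (2*π), W θ = 2*π := by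
    rw [← intervalIntegral.integral_of_le h2π.le]
    have hint2 : IntervalIntegrable (fun θ => (lam * conj (circleMap 0 1 θ)).re) volume 0 (2*π) :=
      (Complex.continuous_re.comp (continuous_const.mul hconjcont)).intervalIntegrable _ _
    rw [hWdef]
    rw [intervalIntegral.integral_add (intervalIntegrable_const) hint2]
    have e1 : ∫ θ in (0:ℝ)..(2*π), (1:ℝ) = 2*π := by simp
    have e2 : ∫ θ in (0:ℝ)..(2*π), (lam * conj (circleMap 0 1 θ)).re = 0 := by
      rw [← ire (fun θ => lam * conj (circleMap 0 1 θ)) 0 (2*π)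
        ((continuous_const.mul hconjcont).intervalIntegrable _ _)]
      rw [intervalIntegral.integral_const_mul, iconj, hcm_int]
      simp
    rw [e1, e2, add_zero]
  -- per-radius key estimate
  have hkey : ∀ r ∈ Ioo (0:ℝ) ε,
      ‖d‖^p * r^(p+1) ≤ (2^p/π) * (r * ∫ θ in (0:ℝ)..(2*π), (max (t (circleMap z r θ)) 0)^p) := by
    rintro r ⟨hr0, hrε⟩
    have hsub : closedBall z r ⊆ ball (0:ℂ) 1 := by
      intro w hw
      rw [mem_closedBall, dist_eq_norm] at hw
      rw [mem_ball_zero_iff]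
      calc ‖w‖ = ‖w - z + z‖ := by rw [sub_add_cancel]
        _ ≤ ‖w - z‖ + ‖z‖ := norm_add_le _ _
        _ < 1 := by linarith
    have hballs : ball z r ⊆ ball (0:ℂ) 1 := ball_subset_closedBall.trans hsub
    have dcc : ∀ {F : ℂ → ℂ}, DifferentiableOn ℂ F (ball (0:ℂ) 1) →
        DiffContOnCl ℂ F (ball z r) := by
      intro F hF
      exact ⟨hF.mono hballs, (hF.continuousOn).mono (by rw [closure_ball z hr0.ne']; exact hsub)⟩
    have hmaps : ∀ θ : ℝ, circleMap z r θ ∈ ball (0:ℂ) 1 :=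
      fun θ => hsub (circleMap_mem_closedBall z hr0.le θ)
    have hψcm : Continuous fun θ => ψ (circleMap z r θ) :=
      hψc.comp_continuous (continuous_circleMap z r) hmaps
    have htcm : Continuous fun θ => t (circleMap z r θ) := Complex.continuous_re.comp hψcm
    have hacont : Continuous fun θ => max (t (circleMap z r θ)) 0 := htcm.max continuous_const
    have hcmr : ∀ θ : ℝ, circleMap z r θ - z = (r:ℂ) * circleMap 0 1 θ := by
      intro θ
      rw [circleMap_sub_center]
      simp [circleMap]
    have mv1 : ∫ θ in (0:ℝ)..(2*π), ψ (circleMap z r θ) = 0 := by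
      have hmv := meanvalue hr0 (dcc hψd)
      simpa [hψdef] using hmv
    have mv2 : ∫ θ in (0:ℝ)..(2*π), circleMap 0 1 θ * ψ (circleMap z r θ) = 0 := by
      have hFd : DifferentiableOn ℂ (fun w => (w - z) * ψ w) (ball (0:ℂ) 1) :=
        (differentiableOn_id.sub (differentiableOn_const _)).mul hψd
      have hmv := meanvalue hr0 (dcc hFd)
      simp only [sub_self, zero_mul, smul_zero] at hmv
      have hmv2 : ∫ θ in (0:ℝ)..(2*π), (r:ℂ) * (circleMap 0 1 θ * ψ (circleMap z r θ)) = 0 := by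
        rw [intervalIntegral.integral_congr
          (g := fun θ => (circleMap z r θ - z) * ψ (circleMap z r θ))
          (fun θ _ => by simp only []; rw [hcmr θ]; ring)]
        exact hmv
      rw [intervalIntegral.integral_const_mul] at hmv2
      rcases mul_eq_zero.mp hmv2 with h' | h'
      · exact absurd h' (by exact_mod_cast hr0.ne')
      · exact h'
    have hds : DifferentiableOn ℂ (dslope φ z) (ball (0:ℂ) 1) :=
      (Complex.differentiableOn_dslope (isOpen_ball.mem_nhds hz)).mpr hφd
    have hrC : ((r:ℝ):ℂ) ≠ 0 := by exact_mod_cast hr0.ne'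
    have mv3 : ∫ θ in (0:ℝ)..(2*π), (circleMap 0 1 θ)⁻¹ * ψ (circleMap z r θ)
        = ((2*π*r : ℝ) : ℂ) * d := by
      have hmv := meanvalue hr0 (dcc hds)
      rw [dslope_same, hder] at hmv
      have hpt : ∀ θ : ℝ, dslope φ z (circleMap z r θ)
          = (r:ℂ)⁻¹ * ((circleMap 0 1 θ)⁻¹ * ψ (circleMap z r θ)) := by
        intro θ
        rw [dslope_of_ne φ (circleMap_ne_center hr0.ne'), slope_def_field, hcmr θ]
        rw [div_eq_mul_inv, mul_inv]
        rw [hψdef]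
        ring
      simp_rw [hpt] at hmv
      rw [intervalIntegral.integral_const_mul] at hmv
      have hmv3 : ((r:ℝ):ℂ) * (((r:ℝ):ℂ)⁻¹ *
          ∫ θ in (0:ℝ)..(2*π), (circleMap 0 1 θ)⁻¹ * ψ (circleMap z r θ))
          = ((r:ℝ):ℂ) * ((2*π:ℝ) • d) := by rw [hmv]
      rw [← mul_assoc, mul_inv_cancel₀ hrC, one_mul] at hmv3
      rw [hmv3, Complex.real_smul]
      push_cast
      ring
    have hci : Continuous fun θ : ℝ => (circleMap 0 1 θ)⁻¹ := by
      have hfe : (fun θ : ℝ => (circleMap 0 1 θ)⁻¹) = fun θ => conj (circleMap 0 1 θ) :=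
        funext hinv
      rw [hfe]
      exact hconjcont
    have hre : ∫ θ in (0:ℝ)..(2*π), ((t (circleMap z r θ) : ℂ) * (circleMap 0 1 θ)⁻¹)
        = ((π*r:ℝ):ℂ) * d := by
      have e : ∀ θ : ℝ, ((t (circleMap z r θ) : ℂ)) * (circleMap 0 1 θ)⁻¹
          = (1/2 : ℂ) * ((circleMap 0 1 θ)⁻¹ * ψ (circleMap z r θ))
            + (1/2 : ℂ) * conj (circleMap 0 1 θ * ψ (circleMap z r θ)) := by
        intro θ
        have h2 : ((t (circleMap z r θ) : ℝ) : ℂ)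
            = (ψ (circleMap z r θ) + conj (ψ (circleMap z r θ))) / 2 := by
          rw [htdef, Complex.add_conj]
          push_cast
          ring
        rw [hinv θ, h2, map_mul]
        ring
      have hi1 : IntervalIntegrable
          (fun θ => (1/2:ℂ) * ((circleMap 0 1 θ)⁻¹ * ψ (circleMap z r θ))) volume 0 (2*π) :=
        (continuous_const.mul (hci.mul hψcm)).intervalIntegrable _ _
      have hi2 : IntervalIntegrable
          (fun θ => (1/2:ℂ) * conj (circleMap 0 1 θ * ψ (circleMap z r θ))) volume 0 (2*π) :=
        (continuous_const.mul (Complex.continuous_conj.comp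
          ((continuous_circleMap 0 1).mul hψcm))).intervalIntegrable _ _
      rw [intervalIntegral.integral_congr (fun θ _ => e θ)]
      rw [intervalIntegral.integral_add hi1 hi2]
      rw [intervalIntegral.integral_const_mul, intervalIntegral.integral_const_mul, mv3,
        iconj, mv2, map_zero]
      push_cast
      ring
    have htint : IntervalIntegrable (fun θ => t (circleMap z r θ)) volume 0 (2*π) :=
      htcm.intervalIntegrable _ _
    have ht0 : ∫ θ in (0:ℝ)..(2*π), t (circleMap z r θ) = 0 := by
      have hirψ := ire (fun θ => ψ (circleMap z r θ)) 0 (2*π) (hψcm.intervalIntegrable _ _)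
      rw [mv1] at hirψ
      simpa [htdef] using hirψ.symm
    have hreal : π * r * ‖d‖ = ∫ θ in (0:ℝ)..(2*π), t (circleMap z r θ) * W θ := by
      have e2 : ∀ θ : ℝ, t (circleMap z r θ) * W θ
          = t (circleMap z r θ)
            + (lam * ((t (circleMap z r θ) : ℂ) * (circleMap 0 1 θ)⁻¹)).re := by
        intro θ
        simp only [hWdef, hinv θ, Complex.mul_re, Complex.mul_im, Complex.ofReal_re,
          Complex.ofReal_im]
        ring
      rw [intervalIntegral.integral_congr (fun θ _ => e2 θ)]
      have hlcont : IntervalIntegrable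
          (fun θ => (lam * ((t (circleMap z r θ) : ℂ) * (circleMap 0 1 θ)⁻¹)).re)
          volume 0 (2*π) :=
        (Complex.continuous_re.comp (continuous_const.mul
          ((Complex.continuous_ofReal.comp htcm).mul hci))).intervalIntegrable _ _
      rw [intervalIntegral.integral_add htint hlcont, ht0, zero_add]
      rw [← ire (fun θ => lam * ((t (circleMap z r θ) : ℂ) * (circleMap 0 1 θ)⁻¹)) 0 (2*π)
        ((continuous_const.mul
          ((Complex.continuous_ofReal.comp htcm).mul hci)).intervalIntegrable _ _)]
      rw [intervalIntegral.integral_const_mul, hre]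
      rw [show lam * (((π*r:ℝ):ℂ) * d) = ((π*r:ℝ):ℂ) * (lam * d) from by ring, hlamd]
      rw [← Complex.ofReal_mul, Complex.ofReal_re]
    have hmono : π * r * ‖d‖ ≤ ∫ θ in (0:ℝ)..(2*π), (max (t (circleMap z r θ)) 0) * W θ := by
      rw [hreal]
      apply intervalIntegral.integral_mono_on h2π.le ((htcm.mul hWc).intervalIntegrable _ _)
        ((hacont.mul hWc).intervalIntegrable _ _)
      intro θ _
      exact mul_le_mul_of_nonneg_right (le_max_left _ _) (hW0 θ)
    have hhold := holder_step hp hacont hWc (fun θ => le_max_right _ _) hW0 hW2 hWint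
    rw [show (∫ θ in Ioc (0:ℝ) (2*π), (max (t (circleMap z r θ)) 0) * W θ)
        = ∫ θ in (0:ℝ)..(2*π), (max (t (circleMap z r θ)) 0) * W θ
        from (intervalIntegral.integral_of_le h2π.le).symm,
      show (∫ θ in Ioc (0:ℝ) (2*π), (max (t (circleMap z r θ)) 0) ^ p)
        = ∫ θ in (0:ℝ)..(2*π), (max (t (circleMap z r θ)) 0) ^ p
        from (intervalIntegral.integral_of_le h2π.le).symm] at hhold
    set I : ℝ := ∫ θ in (0:ℝ)..(2*π), (max (t (circleMap z r θ)) 0) ^ p with hIdef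
    have hI0 : 0 ≤ I := by
      rw [hIdef, intervalIntegral.integral_of_le h2π.le]
      exact setIntegral_nonneg measurableSet_Ioc fun θ _ => Real.rpow_nonneg (le_max_right _ _) p
    have hchain : (π * r * ‖d‖) ^ p ≤ 2 * (2*π)^(p-1) * I := by
      calc (π*r*‖d‖)^p ≤ (∫ θ in (0:ℝ)..(2*π), (max (t (circleMap z r θ)) 0) * W θ)^p :=
            Real.rpow_le_rpow (by positivity) hmono (by linarith)
        _ ≤ 2*(2*π)^(p-1) * I := hhold
    have hLHS : (π*r*‖d‖)^p = π^p * r^p * ‖d‖^p := by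
      rw [Real.mul_rpow (by positivity) (norm_nonneg d), Real.mul_rpow hπ.le hr0.le]
    have h2p : 2 * (2*π)^(p-1) = 2^p * π^(p-1) := by
      rw [Real.mul_rpow (by norm_num : (0:ℝ) ≤ 2) hπ.le, ← mul_assoc]
      congr 1
      rw [show (2:ℝ) * 2^(p-1) = 2^(1:ℝ) * 2^(p-1) from by rw [Real.rpow_one],
        ← Real.rpow_add (by norm_num : (0:ℝ) < 2)]
      norm_num
    have hπp : π^(p-1) = π^p / π := by
      rw [eq_div_iff hπ.ne']
      rw [show π^(p-1) * π = π^(p-1) * π^(1:ℝ) from by rw [Real.rpow_one],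
        ← Real.rpow_add hπ]
      norm_num
    have hπppos : 0 < π^p := Real.rpow_pos_of_pos hπ p
    have hrp : r^(p+1) = r^p * r := by
      rw [Real.rpow_add hr0, Real.rpow_one]
    rw [hLHS, h2p, hπp] at hchain
    rw [hrp]
    have step : r^p * ‖d‖^p ≤ 2^p * I / π := by
      have h' := (div_le_div_iff_of_pos_right hπppos).mpr hchain
      rw [show π^p * r^p * ‖d‖^p / π^p = r^p * ‖d‖^p from by field_simp] at h'
      rw [show 2^p * (π^p/π) * I / π^p = 2^p * I / π from by field_simp] at h'
      exact h'
    calc ‖d‖^p * (r^p * r) = (r^p * ‖d‖^p) * r := by ring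
      _ ≤ (2^p * I/π) * r := mul_le_mul_of_nonneg_right step hr0.le
      _ = 2^p/π * (r * I) := by ring
  -- assemble over the disc
  have hcb : closedBall z ε ⊆ ball (0:ℂ) 1 := by
    intro w hw
    rw [mem_closedBall, dist_eq_norm] at hw
    rw [mem_ball_zero_iff]
    calc ‖w‖ = ‖w - z + z‖ := by rw [sub_add_cancel]
      _ ≤ ‖w - z‖ + ‖z‖ := norm_add_le _ _
      _ < 1 := by linarith
  have hFcont : ContinuousOn (fun w => (max (t w) 0) ^ p) (closedBall z ε) := by
    apply ContinuousOn.rpow_const ((ht_cont.mono hcb).sup continuousOn_const)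
    intro w _
    right
    linarith
  obtain ⟨hΦint, hΦeq⟩ := polar hε hFcont
  have hfball : ContinuousOn (fun w => h w + conj (g w)) (ball (0:ℂ) 1) :=
    hh.continuousOn.add (Complex.continuous_conj.comp_continuousOn hg.continuousOn)
  have hTcont : ContinuousOn (fun w => (max (‖h w + conj (g w)‖ - ‖c‖) 0) ^ p)
      (closedBall z ε) := by
    apply ContinuousOn.rpow_const
      (((hfball.mono hcb).norm.sub continuousOn_const).sup continuousOn_const)
    intro w _
    right
    linarith
  set J : ℝ := ∫ w in ball z ε, (max (‖h w + conj (g w)‖ - ‖c‖) 0) ^ p with hJdef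
  have hJ0 : 0 ≤ J :=
    setIntegral_nonneg measurableSet_ball fun w _ => Real.rpow_nonneg (le_max_right _ _) p
  have hcompar : ∫ w in ball z ε, (max (t w) 0) ^ p ≤ J := by
    apply setIntegral_mono_on
    · exact (hFcont.integrableOn_compact (isCompact_closedBall z ε)).mono_set
        ball_subset_closedBall
    · exact (hTcont.integrableOn_compact (isCompact_closedBall z ε)).mono_set
        ball_subset_closedBall
    · exact measurableSet_ball
    · intro w _
      exact Real.rpow_le_rpow (le_max_right _ _) (max_le_max (ht_le w) le_rfl) (by linarith)
  have hLint : ∫ r in Ioo (0:ℝ) ε, ‖d‖^p * r^(p+1) = ‖d‖^p * (ε^(p+2)/(p+2)) := by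
    rw [MeasureTheory.integral_const_mul]
    congr 1
    rw [← integral_Ioc_eq_integral_Ioo, ← intervalIntegral.integral_of_le hε.le]
    rw [integral_rpow (Or.inl (by linarith : (-1:ℝ) < p+1))]
    rw [Real.zero_rpow (by linarith : p+1+1 ≠ 0)]
    rw [show p+1+1 = p+2 from by ring]
    ring
  have hLintOn : IntegrableOn (fun r => ‖d‖^p * r^(p+1)) (Ioo (0:ℝ) ε) := by
    apply Integrable.const_mul
    have hii := intervalIntegral.intervalIntegrable_rpow' (a := 0) (b := ε)
      (by linarith : (-1:ℝ) < p+1)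
    rw [intervalIntegrable_iff_integrableOn_Ioc_of_le hε.le] at hii
    exact hii.mono_set Ioo_subset_Ioc_self
  have hbig : ‖d‖^p * (ε^(p+2)/(p+2)) ≤ (2^p/π) * J := by
    rw [← hLint]
    calc ∫ r in Ioo (0:ℝ) ε, ‖d‖^p * r^(p+1)
        ≤ ∫ r in Ioo (0:ℝ) ε,
            (2^p/π) * (r * ∫ θ in (0:ℝ)..(2*π), (max (t (circleMap z r θ)) 0)^p) := by
          apply setIntegral_mono_on hLintOn (hΦint.const_mul _) measurableSet_Ioo
          intro r hr
          exact hkey r hr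
      _ = (2^p/π) * ∫ r in Ioo (0:ℝ) ε,
            (r * ∫ θ in (0:ℝ)..(2*π), (max (t (circleMap z r θ)) 0)^p) :=
          MeasureTheory.integral_const_mul _ _
      _ = (2^p/π) * ∫ w in ball z ε, (max (t w) 0)^p := by rw [hΦeq]
      _ ≤ (2^p/π) * J := mul_le_mul_of_nonneg_left hcompar (by positivity)
  have h2pow : (1:ℝ) + p ≤ 2^p := by
    have hB := one_add_mul_self_le_rpow_one_add (by norm_num : (-1:ℝ) ≤ 1) hp
    norm_num at hB
    linarith [hB]
  have h4p : (4:ℝ)^(p+1) = 4 * (2^p * 2^p) := by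
    rw [Real.rpow_add (by norm_num : (0:ℝ) < 4), Real.rpow_one]
    rw [show (4:ℝ) = 2*2 from by norm_num, Real.mul_rpow (by norm_num) (by norm_num)]
    ring
  have hcoef : (p+2) * 2^p ≤ 4^(p+1) := by
    have h2p0 : (0:ℝ) < 2^p := Real.rpow_pos_of_pos (by norm_num) p
    rw [h4p]
    nlinarith [h2pow, h2p0]
  have hεp : (0:ℝ) < ε^(p+2) := Real.rpow_pos_of_pos hε _
  have hKp : (0:ℝ) < K^p := Real.rpow_pos_of_pos (by linarith) p
  have hM : (‖deriv h z‖ + ‖deriv g z‖)^p ≤ K^p * ‖d‖^p := by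
    calc (‖deriv h z‖ + ‖deriv g z‖)^p ≤ (K * ‖d‖)^p :=
          Real.rpow_le_rpow (by positivity) hMd (by linarith)
      _ = K^p * ‖d‖^p := Real.mul_rpow (by linarith) (norm_nonneg d)
  have hdp : ‖d‖^p ≤ (p+2) * (2^p/π) * J / ε^(p+2) := by
    have hp2 : (0:ℝ) < p + 2 := by linarith
    rw [le_div_iff₀ hεp]
    calc ‖d‖^p * ε^(p+2) = (‖d‖^p * (ε^(p+2)/(p+2))) * (p+2) := by field_simp
      _ ≤ ((2^p/π) * J) * (p+2) := mul_le_mul_of_nonneg_right hbig hp2.le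
      _ = (p+2) * (2^p/π) * J := by ring
  calc (‖deriv h z‖ + ‖deriv g z‖)^p ≤ K^p * ‖d‖^p := hM
    _ ≤ K^p * ((p+2) * (2^p/π) * J / ε^(p+2)) := mul_le_mul_of_nonneg_left hdp hKp.le
    _ ≤ (4^(p+1) * K^p / ε^(p+2)) * ((1/π) * J) := by
        rw [show K^p * ((p+2) * (2^p/π) * J / ε^(p+2))
            = ((p+2)*2^p) * (K^p * J / (π * ε^(p+2))) from by field_simp]
        rw [show ((4:ℝ)^(p+1) * K^p / ε^(p+2)) * ((1/π) * J)
            = (4^(p+1)) * (K^p * J / (π * ε^(p+2))) from by field_simp]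
        apply mul_le_mul_of_nonneg_right hcoef
        exact div_nonneg (mul_nonneg hKp.le hJ0) (by positivity)
end

section
/- Let ω be a majorant and let z = re^{iθ} ∈ 𝔻 with r ≥ 1/4. Then (1/2π)∫₀^{2π} P(z, e^{iτ}) ω(|e^{iτ} - e^{iθ}|) dτ ≤ (2/π)ω(1 - r) + 2π(1 - r)∫_{1-r}^π ω(t)/t² dt, where P(z, e^{iτ}) = (1 - |z|²)/|e^{iτ} - z|² is the Poisson kernel. -/
open Real

lemma normsq_exp_sub (u a : ℝ) :
    ‖Complex.exp (u * Complex.I) - (a : ℂ)‖ ^ 2 = (Real.cos u - a) ^ 2 + (Real.sin u) ^ 2 := by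
  rw [Complex.sq_norm, Complex.normSq_apply]
  simp [Complex.exp_mul_I, ← Complex.ofReal_cos, ← Complex.ofReal_sin]
  ring

lemma normsq_exp_sub_one (u : ℝ) :
    ‖Complex.exp (u * Complex.I) - 1‖ ^ 2 = 2 - 2 * Real.cos u := by
  have h := normsq_exp_sub u 1
  push_cast at h
  rw [h]
  nlinarith [Real.sin_sq_add_cos_sq u]

theorem stmt11 (ω : ℝ → ℝ) (hm : IsMajorant ω)
    (r θ : ℝ) (hr : 1 / 4 ≤ r) (hr1 : r < 1) :
    (1 / (2 * π)) *
        ∫ τ in (0:ℝ)..(2 * π),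
          ((1 - r ^ 2) /
              ‖Complex.exp (τ * Complex.I) - (r : ℂ) * Complex.exp (θ * Complex.I)‖ ^ 2) *
            ω ‖Complex.exp (τ * Complex.I) - Complex.exp (θ * Complex.I)‖
      ≤ (2 / π) * ω (1 - r) + 2 * π * (1 - r) * ∫ t in (1 - r)..π, ω t / t ^ 2 := by
  obtain ⟨hc, hmono, h0, hdiv⟩ := hm
  have hπ := Real.pi_pos
  have h1r : 0 < 1 - r := by linarith
  have hr0 : 0 < r := by linarith
  have h1rπ : 1 - r ≤ π := by nlinarith [Real.pi_gt_three]
  have hωnn : ∀ t, 0 ≤ t → 0 ≤ ω t := by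
    intro t ht
    have := hmono (Set.mem_Ici.2 le_rfl) (Set.mem_Ici.2 ht) ht
    rwa [h0] at this
  set f : ℝ → ℝ := fun τ =>
    ((1 - r ^ 2) / ‖Complex.exp (τ * Complex.I) - (r : ℂ) * Complex.exp (θ * Complex.I)‖ ^ 2) *
      ω ‖Complex.exp (τ * Complex.I) - Complex.exp (θ * Complex.I)‖ with hf
  set g : ℝ → ℝ := fun u =>
    ((1 - r ^ 2) / ‖Complex.exp (u * Complex.I) - (r : ℂ)‖ ^ 2) *
      ω ‖Complex.exp (u * Complex.I) - 1‖ with hg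
  -- denominator bounds
  have hden : ∀ u : ℝ, (1 - r) ^ 2 ≤ ‖Complex.exp (u * Complex.I) - (r : ℂ)‖ ^ 2 := by
    intro u
    rw [normsq_exp_sub]
    nlinarith [Real.sin_sq_add_cos_sq u, Real.cos_le_one u]
  have hdenpos : ∀ u : ℝ, 0 < ‖Complex.exp (u * Complex.I) - (r : ℂ)‖ ^ 2 := fun u =>
    lt_of_lt_of_le (by positivity) (hden u)
  -- chord bound
  have hchord : ∀ u : ℝ, 0 ≤ u → ‖Complex.exp (u * Complex.I) - 1‖ ≤ u := by
    intro u hu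
    have h2 : ‖Complex.exp (u * Complex.I) - 1‖ ^ 2 ≤ u ^ 2 := by
      rw [normsq_exp_sub_one]
      nlinarith [Real.one_sub_sq_div_two_le_cos (x := u)]
    nlinarith [norm_nonneg (Complex.exp (u * Complex.I) - 1)]
  -- continuity of g
  have hgcont : Continuous g := by
    apply Continuous.mul
    · apply Continuous.div continuous_const
      · fun_prop
      · intro u; exact (hdenpos u).ne'
    · exact hc.comp_continuous (by fun_prop) (fun u => Set.mem_Ici.2 (norm_nonneg _))
  -- periodicity
  have hper : Function.Periodic f (2 * π) := by
    intro τ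
    have he : Complex.exp (((τ + 2 * π : ℝ) : ℂ) * Complex.I) = Complex.exp (τ * Complex.I) := by
      push_cast
      rw [add_mul, Complex.exp_add, Complex.exp_two_pi_mul_I, mul_one]
    simp only [hf, he]
  -- f (θ + u) = g u
  have hfg : ∀ u : ℝ, f (θ + u) = g u := by
    intro u
    have he : Complex.exp (((θ + u : ℝ) : ℂ) * Complex.I) =
        Complex.exp (θ * Complex.I) * Complex.exp (u * Complex.I) := by
      push_cast; rw [add_mul, Complex.exp_add]
    have hn1 : ‖Complex.exp (((θ + u : ℝ) : ℂ) * Complex.I) -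
        (r : ℂ) * Complex.exp (θ * Complex.I)‖ = ‖Complex.exp (u * Complex.I) - (r : ℂ)‖ := by
      rw [he, show Complex.exp (θ * Complex.I) * Complex.exp (u * Complex.I) -
          (r : ℂ) * Complex.exp (θ * Complex.I) =
          Complex.exp (θ * Complex.I) * (Complex.exp (u * Complex.I) - (r : ℂ)) by ring,
        norm_mul, Complex.norm_exp_ofReal_mul_I, one_mul]
    have hn2 : ‖Complex.exp (((θ + u : ℝ) : ℂ) * Complex.I) -
        Complex.exp (θ * Complex.I)‖ = ‖Complex.exp (u * Complex.I) - 1‖ := by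
      rw [he, show Complex.exp (θ * Complex.I) * Complex.exp (u * Complex.I) -
          Complex.exp (θ * Complex.I) =
          Complex.exp (θ * Complex.I) * (Complex.exp (u * Complex.I) - 1) by ring,
        norm_mul, Complex.norm_exp_ofReal_mul_I, one_mul]
    simp only [hf, hg, hn1, hn2]
  -- evenness of g
  have hgeven : ∀ u : ℝ, g (-u) = g u := by
    intro u
    have hconj : Complex.exp (((-u : ℝ) : ℂ) * Complex.I) =
        (starRingEnd ℂ) (Complex.exp (u * Complex.I)) := by
      rw [← Complex.exp_conj]
      congr 1
      simp [Complex.conj_I]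
    have hn1 : ‖Complex.exp (((-u : ℝ) : ℂ) * Complex.I) - (r : ℂ)‖ =
        ‖Complex.exp (u * Complex.I) - (r : ℂ)‖ := by
      rw [hconj, show (starRingEnd ℂ) (Complex.exp (↑u * Complex.I)) - (r : ℂ) =
        (starRingEnd ℂ) (Complex.exp (↑u * Complex.I) - (r : ℂ)) by
          rw [map_sub, Complex.conj_ofReal]]
      exact RCLike.norm_conj _
    have hn2 : ‖Complex.exp (((-u : ℝ) : ℂ) * Complex.I) - 1‖ =
        ‖Complex.exp (u * Complex.I) - 1‖ := by
      rw [hconj, show (starRingEnd ℂ) (Complex.exp (↑u * Complex.I)) - (1 : ℂ) =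
        (starRingEnd ℂ) (Complex.exp (↑u * Complex.I) - 1) by rw [map_sub, map_one]]
      exact RCLike.norm_conj _
    simp only [hg, hn1, hn2]
  -- transfer the integral
  have hstep1 : ∫ τ in (0:ℝ)..(2 * π), f τ = ∫ u in (-π)..π, g u := by
    have h1 : ∫ τ in (0:ℝ)..(0 + 2 * π), f τ = ∫ τ in (θ - π)..((θ - π) + 2 * π), f τ :=
      hper.intervalIntegral_add_eq 0 (θ - π)
    have h2 : ∫ u in (-π)..π, f (θ + u) = ∫ τ in (θ + -π)..(θ + π), f τ :=
      intervalIntegral.integral_comp_add_left f θ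
    simp only [zero_add] at h1
    rw [h1, show (θ - π) + 2 * π = θ + π by ring, show θ - π = θ + -π by ring, ← h2]
    exact intervalIntegral.integral_congr (fun u _ => hfg u)
  have hstep2 : ∫ u in (-π)..π, g u = 2 * ∫ u in (0:ℝ)..π, g u := by
    have h1 : ∫ u in (0:ℝ)..π, g (-u) = ∫ u in (-π)..(-(0:ℝ)), g u :=
      intervalIntegral.integral_comp_neg g
    simp only [hgeven, neg_zero] at h1
    rw [← intervalIntegral.integral_add_adjacent_intervals (a := -π) (b := 0) (c := π)
      (hgcont.intervalIntegrable _ _) (hgcont.intervalIntegrable _ _), ← h1, two_mul]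
  -- bound on [0, 1-r]
  have hD : ∫ u in (0:ℝ)..(1 - r), g u ≤ 2 * ω (1 - r) := by
    have hle : ∀ u ∈ Set.Icc (0:ℝ) (1 - r), g u ≤ (2 / (1 - r)) * ω (1 - r) := by
      intro u hu
      have hch : ‖Complex.exp (u * Complex.I) - 1‖ ≤ 1 - r := (hchord u hu.1).trans hu.2
      have hω : ω ‖Complex.exp (u * Complex.I) - 1‖ ≤ ω (1 - r) :=
        hmono (Set.mem_Ici.2 (norm_nonneg _)) (Set.mem_Ici.2 h1r.le) hch
      have hP : (1 - r ^ 2) / ‖Complex.exp (u * Complex.I) - (r : ℂ)‖ ^ 2 ≤ 2 / (1 - r) := by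
        rw [div_le_div_iff₀ (hdenpos u) h1r]
        nlinarith [hden u]
      exact mul_le_mul hP hω (hωnn _ (norm_nonneg _))
        (by positivity)
    calc ∫ u in (0:ℝ)..(1 - r), g u
        ≤ ∫ _ in (0:ℝ)..(1 - r), (2 / (1 - r)) * ω (1 - r) :=
          intervalIntegral.integral_mono_on h1r.le (hgcont.intervalIntegrable _ _)
            intervalIntegrable_const hle
      _ = (1 - r) * ((2 / (1 - r)) * ω (1 - r)) := by simp; ring
      _ = 2 * ω (1 - r) := by
          rw [show (1 - r) * (2 / (1 - r) * ω (1 - r)) = (1 - r) / (1 - r) * (2 * ω (1 - r)) by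
            ring, div_self h1r.ne', one_mul]
  -- integrability of the majorant integrand
  have hInt2 : IntervalIntegrable (fun t => 2 * (1 - r) * π ^ 2 * (ω t / t ^ 2))
      MeasureTheory.volume (1 - r) π := by
    apply ContinuousOn.intervalIntegrable
    apply ContinuousOn.mul continuousOn_const
    apply ContinuousOn.div
    · apply hc.mono
      intro t ht
      rw [Set.uIcc_of_le h1rπ] at ht
      exact Set.mem_Ici.2 (le_trans h1r.le ht.1)
    · exact (continuous_pow 2).continuousOn
    · intro t ht
      rw [Set.uIcc_of_le h1rπ] at ht
      have : 0 < t := lt_of_lt_of_le h1r ht.1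
      positivity
  -- bound on [1-r, π]
  have hE : ∫ u in (1 - r)..π, g u ≤ 2 * (1 - r) * π ^ 2 * ∫ t in (1 - r)..π, ω t / t ^ 2 := by
    rw [← intervalIntegral.integral_const_mul]
    apply intervalIntegral.integral_mono_on h1rπ (hgcont.intervalIntegrable _ _) hInt2
    intro u hu
    have hu0 : 0 < u := lt_of_lt_of_le h1r hu.1
    have hlow : u ^ 2 / π ^ 2 ≤ ‖Complex.exp (u * Complex.I) - (r : ℂ)‖ ^ 2 := by
      rw [normsq_exp_sub]
      have hcos : Real.cos u ≤ 1 - 2 / π ^ 2 * u ^ 2 :=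
        Real.cos_le_one_sub_mul_cos_sq (by rw [abs_of_nonneg hu0.le]; exact hu.2)
      have hsc := Real.sin_sq_add_cos_sq u
      have hπ2 : (0:ℝ) < π ^ 2 := by positivity
      have hcos' : π ^ 2 * Real.cos u ≤ π ^ 2 - 2 * u ^ 2 := by
        have h := mul_le_mul_of_nonneg_left hcos hπ2.le
        have he : π ^ 2 * (1 - 2 / π ^ 2 * u ^ 2) = π ^ 2 - 2 * u ^ 2 := by
          field_simp
        linarith [he ▸ h]
      rw [div_le_iff₀ hπ2]
      nlinarith [mul_le_mul_of_nonneg_left hcos' (by linarith : (0:ℝ) ≤ 2 * r),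
        mul_nonneg hπ2.le (sq_nonneg (1 - r)),
        mul_nonneg (by linarith : (0:ℝ) ≤ 4 * r - 1) (sq_nonneg u)]
    have hP : (1 - r ^ 2) / ‖Complex.exp (u * Complex.I) - (r : ℂ)‖ ^ 2
        ≤ 2 * (1 - r) * π ^ 2 / u ^ 2 := by
      rw [div_le_div_iff₀ (hdenpos u) (by positivity)]
      have key := mul_le_mul_of_nonneg_left hlow
        (by positivity : (0:ℝ) ≤ 2 * (1 - r) * π ^ 2)
      have hπ2 : (0:ℝ) < π ^ 2 := by positivity
      have h1 : 2 * (1 - r) * π ^ 2 * (u ^ 2 / π ^ 2) = 2 * (1 - r) * u ^ 2 := by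
        field_simp
      rw [h1] at key
      nlinarith [key, mul_nonneg (sq_nonneg (1 - r)) (sq_nonneg u)]
    have hω : ω ‖Complex.exp (u * Complex.I) - 1‖ ≤ ω u :=
      hmono (Set.mem_Ici.2 (norm_nonneg _)) (Set.mem_Ici.2 hu0.le) (hchord u hu0.le)
    calc g u ≤ (2 * (1 - r) * π ^ 2 / u ^ 2) * ω u :=
        mul_le_mul hP hω (hωnn _ (norm_nonneg _)) (by positivity)
      _ = 2 * (1 - r) * π ^ 2 * (ω u / u ^ 2) := by ring
  -- combine
  have hsplit : ∫ u in (0:ℝ)..π, g u =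
      (∫ u in (0:ℝ)..(1 - r), g u) + ∫ u in (1 - r)..π, g u :=
    (intervalIntegral.integral_add_adjacent_intervals
      (hgcont.intervalIntegrable _ _) (hgcont.intervalIntegrable _ _)).symm
  have hfinal : (1 / (2 * π)) * ∫ τ in (0:ℝ)..(2 * π), f τ =
      (1 / π) * ((∫ u in (0:ℝ)..(1 - r), g u) + ∫ u in (1 - r)..π, g u) := by
    rw [hstep1, hstep2, ← hsplit]
    field_simp
  calc (1 / (2 * π)) * ∫ τ in (0:ℝ)..(2 * π), f τ
      = (1 / π) * ((∫ u in (0:ℝ)..(1 - r), g u) + ∫ u in (1 - r)..π, g u) := hfinal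
    _ ≤ (1 / π) * (2 * ω (1 - r) + 2 * (1 - r) * π ^ 2 * ∫ t in (1 - r)..π, ω t / t ^ 2) := by
        apply mul_le_mul_of_nonneg_left (add_le_add hD hE) (by positivity)
    _ = (2 / π) * ω (1 - r) + 2 * π * (1 - r) * ∫ t in (1 - r)..π, ω t / t ^ 2 := by
        field_simp
end

section
/- Let ω be a majorant such that the Poisson extension P[φ] of every φ ∈ Λ_{ω,∞}(𝕋) belongs to Λ_{ω,∞}(closure of 𝔻). Then there is M > 0 such that for all δ ∈ (0, π], δ·∫_δ^π ω(t)/t² dt ≤ M·ω(δ). -/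
open Metric Real

/-- The Poisson extension of a boundary function `φ` to the closed unit disk:
the Poisson integral inside the open disk and `φ` itself on the boundary. -/
noncomputable def poissonExt (φ : ℂ → ℝ) (z : ℂ) : ℝ :=
  if ‖z‖ < 1 then
    (1 / (2 * π)) *
      ∫ τ in (0:ℝ)..(2 * π),
        φ (Complex.exp (τ * Complex.I)) *
          ((1 - ‖z‖ ^ 2) / ‖Complex.exp (τ * Complex.I) - z‖ ^ 2)
  else φ z

namespace Stmt12Aux

variable {ω : ℝ → ℝ}

lemma maj_nonneg (hm : IsMajorant ω) {t : ℝ} (ht : 0 ≤ t) : 0 ≤ ω t := by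
  have h := hm.2.1 (Set.mem_Ici.mpr le_rfl) (Set.mem_Ici.mpr ht) ht
  rw [hm.2.2.1] at h; exact h

lemma maj_mono (hm : IsMajorant ω) {s t : ℝ} (hs : 0 ≤ s) (hst : s ≤ t) : ω s ≤ ω t :=
  hm.2.1 (Set.mem_Ici.mpr hs) (Set.mem_Ici.mpr (hs.trans hst)) hst

lemma maj_scale (hm : IsMajorant ω) {c t : ℝ} (hc : 1 ≤ c) (ht : 0 ≤ t) :
    ω (c * t) ≤ c * ω t := by
  rcases ht.eq_or_lt with h | h
  · rw [← h, mul_zero, hm.2.2.1, mul_zero]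
  · have hct : 0 < c * t := by nlinarith
    have hd := hm.2.2.2 t (c * t) h (le_mul_of_one_le_left h.le hc)
    rw [div_le_div_iff₀ hct h] at hd
    nlinarith

lemma maj_sub (hm : IsMajorant ω) {a b : ℝ} (hb : 0 ≤ b) (hba : b ≤ a) :
    ω a - ω b ≤ ω (a - b) := by
  rcases hb.eq_or_lt with h | hb'
  · rw [← h]; simp [hm.2.2.1]
  rcases hba.eq_or_lt with h | hba'
  · simp [h, hm.2.2.1]
  have ha : 0 < a := hb'.trans hba'
  have hab : 0 < a - b := sub_pos.mpr hba'
  have h1 := hm.2.2.2 b a hb' hba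
  have h2 := hm.2.2.2 (a - b) a hab (by linarith)
  rw [div_le_div_iff₀ ha hb'] at h1
  rw [div_le_div_iff₀ ha hab] at h2
  nlinarith

lemma sq_norm_eq (z : ℂ) : ‖z‖ ^ 2 = z.re ^ 2 + z.im ^ 2 := by
  rw [Complex.sq_norm, Complex.normSq_apply]; ring

lemma chord_sq (τ : ℝ) : ‖Complex.exp (τ * Complex.I) - 1‖ ^ 2 = 2 - 2 * Real.cos τ := by
  rw [sq_norm_eq, Complex.sub_re, Complex.sub_im, Complex.exp_ofReal_mul_I_re,
    Complex.exp_ofReal_mul_I_im, Complex.one_re, Complex.one_im]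
  linear_combination Real.sin_sq_add_cos_sq τ

lemma two_sub_cos_le (τ : ℝ) : 2 - 2 * Real.cos τ ≤ τ ^ 2 := by
  have h1 := Real.sin_sq_le_sq (x := τ / 2)
  have h2 := Real.cos_two_mul (τ / 2)
  have h3 := Real.sin_sq_add_cos_sq (τ / 2)
  have h4 : 2 * (τ / 2) = τ := by ring
  rw [h4] at h2
  nlinarith

lemma chord_le {τ : ℝ} (hτ : 0 ≤ τ) : ‖Complex.exp (τ * Complex.I) - 1‖ ≤ τ := by
  have h1 := chord_sq τ
  have h2 := two_sub_cos_le τ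
  have h3 : (0:ℝ) ≤ ‖Complex.exp (τ * Complex.I) - 1‖ := norm_nonneg _
  nlinarith

lemma arc_le {α d : ℝ} (hα : |α| ≤ π) (h : 2 - 2 * Real.cos α ≤ d ^ 2) (hd : 0 ≤ d) :
    |α| ≤ π / 2 * d := by
  have h0 : 0 ≤ |α| := abs_nonneg α
  have hπ := Real.pi_pos
  have hj := Real.mul_le_sin (x := |α| / 2) (by positivity) (by linarith)
  have hs : Real.sin (|α| / 2) ^ 2 = (1 - Real.cos α) / 2 := by
    have h2 := Real.cos_two_mul (|α| / 2)
    have h3 := Real.sin_sq_add_cos_sq (|α| / 2)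
    have h4 : 2 * (|α| / 2) = |α| := by ring
    rw [h4, Real.cos_abs] at h2
    nlinarith
  have hsin_nonneg : 0 ≤ Real.sin (|α| / 2) := le_trans (by positivity) hj
  have h5 : |α| ≤ Real.sin (|α| / 2) * π := by
    have heq : |α| / π = 2 / π * (|α| / 2) := by ring
    exact (div_le_iff₀ hπ).mp (heq ▸ hj)
  have h6 : Real.sin (|α| / 2) ≤ d / 2 := by nlinarith
  nlinarith

lemma theta_dist {ξ₁ ξ₂ : ℂ} (h1 : ‖ξ₁‖ = 1) (h2 : ‖ξ₂‖ = 1) :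
    |Real.arccos ξ₁.re - Real.arccos ξ₂.re| ≤ π / 2 * ‖ξ₁ - ξ₂‖ := by
  have hn1 : ξ₁.re ^ 2 + ξ₁.im ^ 2 = 1 := by
    have h := sq_norm_eq ξ₁; rw [h1] at h; nlinarith
  have hn2 : ξ₂.re ^ 2 + ξ₂.im ^ 2 = 1 := by
    have h := sq_norm_eq ξ₂; rw [h2] at h; nlinarith
  set θ₁ := Real.arccos ξ₁.re with hθ₁
  set θ₂ := Real.arccos ξ₂.re with hθ₂
  have hre1 : Real.cos θ₁ = ξ₁.re := Real.cos_arccos (by nlinarith) (by nlinarith)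
  have hre2 : Real.cos θ₂ = ξ₂.re := Real.cos_arccos (by nlinarith) (by nlinarith)
  have hsin1 : Real.sin θ₁ = |ξ₁.im| := by
    rw [hθ₁, Real.sin_arccos, show 1 - ξ₁.re ^ 2 = ξ₁.im ^ 2 by linarith, Real.sqrt_sq_eq_abs]
  have hsin2 : Real.sin θ₂ = |ξ₂.im| := by
    rw [hθ₂, Real.sin_arccos, show 1 - ξ₂.re ^ 2 = ξ₂.im ^ 2 by linarith, Real.sqrt_sq_eq_abs]
  have hθ1a : 0 ≤ θ₁ := Real.arccos_nonneg _
  have hθ1b : θ₁ ≤ π := Real.arccos_le_pi _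
  have hθ2a : 0 ≤ θ₂ := Real.arccos_nonneg _
  have hθ2b : θ₂ ≤ π := Real.arccos_le_pi _
  have hαπ : |θ₁ - θ₂| ≤ π := abs_le.mpr ⟨by linarith, by linarith⟩
  have hcos : 2 - 2 * Real.cos (θ₁ - θ₂) ≤ ‖ξ₁ - ξ₂‖ ^ 2 := by
    rw [Real.cos_sub, hre1, hre2, hsin1, hsin2, sq_norm_eq, Complex.sub_re, Complex.sub_im]
    have him : ξ₁.im * ξ₂.im ≤ |ξ₁.im| * |ξ₂.im| := by
      rw [← abs_mul]; exact le_abs_self _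
    have ha1 : |ξ₁.im| ^ 2 = ξ₁.im ^ 2 := sq_abs _
    have ha2 : |ξ₂.im| ^ 2 = ξ₂.im ^ 2 := sq_abs _
    nlinarith
  exact arc_le hαπ hcos (norm_nonneg _)

lemma phi_lip (hm : IsMajorant ω) {ξ₁ ξ₂ : ℂ} (h1 : ‖ξ₁‖ = 1) (h2 : ‖ξ₂‖ = 1) :
    |ω (Real.arccos ξ₁.re) - ω (Real.arccos ξ₂.re)| ≤ π / 2 * ω ‖ξ₁ - ξ₂‖ := by
  have key : ∀ ζ₁ ζ₂ : ℂ, ‖ζ₁‖ = 1 → ‖ζ₂‖ = 1 →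
      ω (Real.arccos ζ₁.re) - ω (Real.arccos ζ₂.re) ≤ π / 2 * ω ‖ζ₁ - ζ₂‖ := by
    intro ζ₁ ζ₂ k1 k2
    set θ₁ := Real.arccos ζ₁.re
    set θ₂ := Real.arccos ζ₂.re
    have hrhs : 0 ≤ π / 2 * ω ‖ζ₁ - ζ₂‖ :=
      mul_nonneg (by positivity) (maj_nonneg hm (norm_nonneg _))
    rcases le_total θ₁ θ₂ with h | h
    · have hmono : ω θ₁ ≤ ω θ₂ := maj_mono hm (Real.arccos_nonneg _) h
      linarith
    · have hd := theta_dist k1 k2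
      have h3 : ω θ₁ - ω θ₂ ≤ ω (θ₁ - θ₂) := maj_sub hm (Real.arccos_nonneg _) h
      have h4 : ω (θ₁ - θ₂) ≤ ω (π / 2 * ‖ζ₁ - ζ₂‖) := by
        apply maj_mono hm (by linarith [Real.arccos_nonneg ζ₂.re, Real.arccos_nonneg ζ₁.re])
        calc θ₁ - θ₂ ≤ |θ₁ - θ₂| := le_abs_self _
          _ ≤ _ := hd
      have h5 : ω (π / 2 * ‖ζ₁ - ζ₂‖) ≤ π / 2 * ω ‖ζ₁ - ζ₂‖ :=
        maj_scale hm (by nlinarith [Real.pi_gt_three]) (norm_nonneg _)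
      linarith
  rw [abs_sub_le_iff]
  refine ⟨key _ _ h1 h2, ?_⟩
  rw [norm_sub_rev]
  exact key _ _ h2 h1

end Stmt12Aux

open Stmt12Aux

theorem stmt12 (ω : ℝ → ℝ) (hm : IsMajorant ω)
    (hyp : ∀ φ : ℂ → ℝ,
      (∃ L > (0:ℝ), ∀ ξ₁ ∈ sphere (0:ℂ) 1, ∀ ξ₂ ∈ sphere (0:ℂ) 1,
        |φ ξ₁ - φ ξ₂| ≤ L * ω ‖ξ₁ - ξ₂‖) →
      ∃ C > (0:ℝ), ∀ z₁ ∈ closedBall (0:ℂ) 1, ∀ z₂ ∈ closedBall (0:ℂ) 1,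
        |poissonExt φ z₁ - poissonExt φ z₂| ≤ C * ω ‖z₁ - z₂‖) :
    ∃ M > (0:ℝ), ∀ δ : ℝ, 0 < δ → δ ≤ π →
      δ * ∫ t in δ..π, ω t / t ^ 2 ≤ M * ω δ := by
  by_cases hπpos : 0 < ω π
  · -- main case : ω is positive on (0, ∞)
    have hωpos : ∀ t : ℝ, 0 < t → 0 < ω t := by
      intro t ht
      rcases le_or_gt π t with h | h
      · exact lt_of_lt_of_le hπpos (maj_mono hm Real.pi_pos.le h)
      · by_contra hc
        push_neg at hc
        have h0 : ω t = 0 := le_antisymm hc (maj_nonneg hm ht.le)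
        have hd := hm.2.2.2 t π ht h.le
        rw [h0, zero_div] at hd
        have hππ := Real.pi_pos
        have : ω π ≤ 0 := by
          have h2 : ω π / π * π ≤ 0 := mul_nonpos_of_nonpos_of_nonneg hd hππ.le
          rwa [div_mul_cancel₀ _ hππ.ne'] at h2
        linarith
    set φ : ℂ → ℝ := fun z => ω (Real.arccos z.re) with hφdef
    have hlip : ∃ L > (0:ℝ), ∀ ξ₁ ∈ sphere (0:ℂ) 1, ∀ ξ₂ ∈ sphere (0:ℂ) 1,
        |φ ξ₁ - φ ξ₂| ≤ L * ω ‖ξ₁ - ξ₂‖ := by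
      refine ⟨π / 2, by positivity, fun ξ₁ hξ₁ ξ₂ hξ₂ => ?_⟩
      rw [mem_sphere_zero_iff_norm] at hξ₁ hξ₂
      exact phi_lip hm hξ₁ hξ₂
    obtain ⟨C, hC, hCb⟩ := hyp φ hlip
    -- the key estimate for small δ
    have key : ∀ δ : ℝ, 0 < δ → δ ≤ 1 / 2 →
        δ * ∫ t in δ..π, ω t / t ^ 2 ≤ 8 * π * C * ω δ := by
      intro δ hδ hδ2
      have hπ3 := Real.pi_gt_three
      set r : ℝ := 1 - δ with hrdef
      have hr0 : (0:ℝ) ≤ r := by rw [hrdef]; linarith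
      have hr1 : r < 1 := by rw [hrdef]; linarith
      have hrc : ‖(r:ℂ)‖ = r := by
        rw [Complex.norm_real, Real.norm_eq_abs, abs_of_nonneg hr0]
      have hδπ : δ ≤ π := by linarith
      have hP1 : poissonExt φ 1 = 0 := by
        unfold poissonExt
        rw [if_neg (by simp)]
        simp [hφdef, Complex.one_re, Real.arccos_one, hm.2.2.1]
      have hz1 : (r:ℂ) ∈ closedBall (0:ℂ) 1 := by
        rw [mem_closedBall_zero_iff, hrc]; linarith
      have hz2 : (1:ℂ) ∈ closedBall (0:ℂ) 1 := by
        rw [mem_closedBall_zero_iff, norm_one]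
      have hnd : ‖(r:ℂ) - 1‖ = δ := by
        rw [show ((r:ℂ) - 1) = ((r - 1 : ℝ) : ℂ) by push_cast; ring,
          Complex.norm_real, Real.norm_eq_abs, hrdef]
        rw [abs_of_nonpos (by linarith)]; ring
      have hPle : poissonExt φ r ≤ C * ω δ := by
        have h := hCb _ hz1 _ hz2
        rw [hP1, sub_zero, hnd] at h
        exact (le_abs_self _).trans h
      set f : ℝ → ℝ := fun τ =>
        φ (Complex.exp (τ * Complex.I)) *
          ((1 - r ^ 2) / ‖Complex.exp (τ * Complex.I) - (r:ℂ)‖ ^ 2) with hfdef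
      have hPr : poissonExt φ r = (1 / (2 * π)) * ∫ τ in (0:ℝ)..(2 * π), f τ := by
        unfold poissonExt
        rw [if_pos (by rw [hrc]; linarith)]
        simp only [hrc, hfdef]
      have hexp_cont : Continuous fun τ : ℝ => Complex.exp (τ * Complex.I) :=
        Complex.continuous_exp.comp (Complex.continuous_ofReal.mul continuous_const)
      have hφτ : Continuous fun τ : ℝ => φ (Complex.exp (τ * Complex.I)) := by
        rw [hφdef]
        exact hm.1.comp_continuous
          (Real.continuous_arccos.comp (Complex.continuous_re.comp hexp_cont))
          (fun τ => Set.mem_Ici.mpr (Real.arccos_nonneg _))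
      have hne : ∀ τ : ℝ, Complex.exp (τ * Complex.I) - (r:ℂ) ≠ 0 := by
        intro τ h
        have hn := Complex.norm_exp_ofReal_mul_I τ
        rw [sub_eq_zero] at h
        rw [h, hrc] at hn
        linarith
      have hker : Continuous fun τ : ℝ =>
          (1 - r ^ 2) / ‖Complex.exp (τ * Complex.I) - (r:ℂ)‖ ^ 2 :=
        continuous_const.div (((hexp_cont.sub continuous_const).norm).pow 2)
          (fun τ => pow_ne_zero 2 (norm_ne_zero_iff.mpr (hne τ)))
      have hfc : Continuous f := by rw [hfdef]; exact hφτ.mul hker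
      have hf0 : ∀ τ : ℝ, 0 ≤ f τ := by
        intro τ
        rw [hfdef]
        apply mul_nonneg
        · rw [hφdef]; exact maj_nonneg hm (Real.arccos_nonneg _)
        · exact div_nonneg (by nlinarith) (pow_nonneg (norm_nonneg _) 2)
      have h4 : (∫ τ in δ..π, f τ) ≤ ∫ τ in (0:ℝ)..(2 * π), f τ :=
        intervalIntegral.integral_mono_interval hδ.le hδπ (by linarith)
          (MeasureTheory.ae_of_all _ hf0) (hfc.intervalIntegrable _ _)
      have hpt : ∀ τ ∈ Set.Icc δ π, δ / 4 * (ω τ / τ ^ 2) ≤ f τ := by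
        intro τ hτ
        have hτ0 : 0 < τ := lt_of_lt_of_le hδ hτ.1
        have hφval : φ (Complex.exp (τ * Complex.I)) = ω τ := by
          rw [hφdef]
          simp only
          rw [Complex.exp_ofReal_mul_I_re, Real.arccos_cos hτ0.le hτ.2]
        have htri := dist_triangle (Complex.exp (τ * Complex.I)) (1:ℂ) ((r:ℂ))
        rw [dist_eq_norm, dist_eq_norm, dist_eq_norm] at htri
        have h1r : ‖(1:ℂ) - (r:ℂ)‖ = δ := by
          rw [show ((1:ℂ) - r) = ((1 - r : ℝ) : ℂ) by push_cast; ring,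
            Complex.norm_real, Real.norm_eq_abs, hrdef, abs_of_nonneg (by linarith)]
          ring
        have hch := chord_le hτ0.le
        have hnorm_le : ‖Complex.exp (τ * Complex.I) - (r:ℂ)‖ ≤ 2 * τ := by
          rw [h1r] at htri
          linarith [hτ.1]
        have hnorm_sq : ‖Complex.exp (τ * Complex.I) - (r:ℂ)‖ ^ 2 ≤ 4 * τ ^ 2 := by
          nlinarith [norm_nonneg (Complex.exp (τ * Complex.I) - (r:ℂ))]
        have hnum : δ ≤ 1 - r ^ 2 := by rw [hrdef]; nlinarith
        have hden_pos : 0 < ‖Complex.exp (τ * Complex.I) - (r:ℂ)‖ ^ 2 :=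
          pow_pos (norm_pos_iff.mpr (hne τ)) 2
        have hK : δ / (4 * τ ^ 2) ≤
            (1 - r ^ 2) / ‖Complex.exp (τ * Complex.I) - (r:ℂ)‖ ^ 2 :=
          div_le_div₀ (by nlinarith) hnum hden_pos hnorm_sq
        rw [hfdef]
        simp only
        rw [hφval]
        have heq : δ / 4 * (ω τ / τ ^ 2) = ω τ * (δ / (4 * τ ^ 2)) := by
          field_simp
        rw [heq]
        exact mul_le_mul_of_nonneg_left hK (maj_nonneg hm hτ0.le)
      have hint2 : IntervalIntegrable (fun τ => δ / 4 * (ω τ / τ ^ 2))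
          MeasureTheory.volume δ π := by
        apply ContinuousOn.intervalIntegrable
        rw [Set.uIcc_of_le hδπ]
        apply ContinuousOn.mul continuousOn_const
        apply ContinuousOn.div
        · exact hm.1.mono (fun x hx => Set.mem_Ici.mpr (le_trans hδ.le hx.1))
        · exact (continuous_pow 2).continuousOn
        · intro x hx
          exact pow_ne_zero 2 (ne_of_gt (lt_of_lt_of_le hδ hx.1))
      have h5 : (∫ τ in δ..π, δ / 4 * (ω τ / τ ^ 2)) ≤ ∫ τ in δ..π, f τ :=
        intervalIntegral.integral_mono_on hδπ hint2 (hfc.intervalIntegrable _ _) hpt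
      rw [intervalIntegral.integral_const_mul] at h5
      have hfinal : (1 / (2 * π)) * ∫ τ in (0:ℝ)..(2 * π), f τ ≤ C * ω δ := by
        rw [← hPr]; exact hPle
      have hK2 : (∫ τ in (0:ℝ)..(2 * π), f τ) ≤ C * ω δ * (2 * π) := by
        rwa [one_div_mul_eq_div, div_le_iff₀ (by positivity)] at hfinal
      nlinarith [h5, h4, hK2]
    -- assemble
    have hω2 : 0 < ω (1 / 2) := hωpos (1 / 2) (by norm_num)
    have hπ3 := Real.pi_gt_three
    have hint12 : IntervalIntegrable (fun t => ω t / t ^ 2)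
        MeasureTheory.volume (1 / 2) π := by
      apply ContinuousOn.intervalIntegrable
      rw [Set.uIcc_of_le (by linarith)]
      apply ContinuousOn.div
      · exact hm.1.mono (fun x hx => Set.mem_Ici.mpr (by linarith [hx.1]))
      · exact (continuous_pow 2).continuousOn
      · intro x hx
        have : (0:ℝ) < x := by linarith [hx.1]
        exact pow_ne_zero 2 (ne_of_gt this)
    set A : ℝ := ∫ t in (1 / 2 : ℝ)..π, ω t / t ^ 2 with hAdef
    have hA0 : 0 ≤ A := by
      rw [hAdef]
      apply intervalIntegral.integral_nonneg (by linarith)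
      intro u hu
      exact div_nonneg (maj_nonneg hm (by linarith [hu.1]))
        (pow_nonneg (by linarith [hu.1]) 2)
    refine ⟨max (8 * π * C) (π * A / ω (1 / 2)),
      lt_of_lt_of_le (by positivity) (le_max_left _ _), fun δ hδ hδπ => ?_⟩
    rcases le_or_gt δ (1 / 2) with hcase | hcase
    · calc δ * ∫ t in δ..π, ω t / t ^ 2 ≤ 8 * π * C * ω δ := key δ hδ hcase
        _ ≤ _ := mul_le_mul_of_nonneg_right (le_max_left _ _) (maj_nonneg hm hδ.le)
    · have hI0 : (∫ t in δ..π, ω t / t ^ 2) ≤ A := by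
        rw [hAdef]
        apply intervalIntegral.integral_mono_interval (by linarith) hδπ le_rfl
        · apply MeasureTheory.ae_restrict_of_forall_mem measurableSet_Ioc
          intro x hx
          exact div_nonneg (maj_nonneg hm (by linarith [hx.1]))
            (pow_nonneg (by linarith [hx.1]) 2)
        · exact hint12
      have hInn : 0 ≤ (∫ t in δ..π, ω t / t ^ 2) := by
        apply intervalIntegral.integral_nonneg hδπ
        intro u hu
        exact div_nonneg (maj_nonneg hm (le_trans hδ.le hu.1))
          (pow_nonneg (le_trans hδ.le hu.1) 2)
      have step1 : δ * (∫ t in δ..π, ω t / t ^ 2) ≤ π * A := by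
        nlinarith
      have hωδ : ω (1 / 2) ≤ ω δ := maj_mono hm (by norm_num) hcase.le
      have step2 : π * A ≤ π * A / ω (1 / 2) * ω δ := by
        rw [div_mul_eq_mul_div, le_div_iff₀ hω2]
        exact mul_le_mul_of_nonneg_left hωδ (mul_nonneg Real.pi_pos.le hA0)
      calc δ * ∫ t in δ..π, ω t / t ^ 2 ≤ π * A := step1
        _ ≤ π * A / ω (1 / 2) * ω δ := step2
        _ ≤ _ := mul_le_mul_of_nonneg_right (le_max_right _ _) (maj_nonneg hm hδ.le)
  · -- degenerate case : ω vanishes identically on [0, π]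
    refine ⟨1, one_pos, fun δ hδ hδπ => ?_⟩
    have hzero' : Set.EqOn (fun t => ω t / t ^ 2) (fun _ => (0:ℝ)) (Set.uIcc δ π) := by
      intro t ht
      rw [Set.uIcc_of_le hδπ] at ht
      have h1 : 0 ≤ ω t := maj_nonneg hm (le_trans hδ.le ht.1)
      have h2 : ω t ≤ ω π := maj_mono hm (le_trans hδ.le ht.1) ht.2
      have h3 : ω t = 0 := le_antisymm (by push_neg at hπpos; linarith) h1
      simp [h3]
    rw [intervalIntegral.integral_congr hzero']
    simp only [intervalIntegral.integral_const, smul_zero, mul_zero, one_mul]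
    exact maj_nonneg hm hδ.le
end

section
/- Let f be holomorphic on 𝔻 and continuous on the closed unit disk. For z ∈ 𝔻 define M_z = max{|f(w)| : |w - z| ≤ 1 - |z|}. Then for every z ∈ 𝔻, (1/2)(1 - |z|)|f'(z)| + |f(z)| ≤ M_z. -/
open Metric

theorem stmt15 (f : ℂ → ℂ)
    (hf : DifferentiableOn ℂ f (ball (0:ℂ) 1))
    (hc : ContinuousOn f (closedBall (0:ℂ) 1))
    (z : ℂ) (hz : z ∈ ball (0:ℂ) 1) :
    (1 / 2) * (1 - ‖z‖) * ‖deriv f z‖ + ‖f z‖ ≤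
      sSup ((fun w => ‖f w‖) '' closedBall z (1 - ‖z‖)) := by
  have hz1 : ‖z‖ < 1 := mem_ball_zero_iff.mp hz
  set r : ℝ := 1 - ‖z‖ with hr_def
  have hr : 0 < r := by simp only [hr_def]; linarith
  have hsub : closedBall z r ⊆ closedBall (0:ℂ) 1 := by
    intro w hw
    rw [mem_closedBall, dist_eq_norm] at hw
    rw [mem_closedBall_zero_iff]
    calc ‖w‖ = ‖w - z + z‖ := by ring_nf
    _ ≤ ‖w - z‖ + ‖z‖ := norm_add_le _ _
    _ ≤ r + ‖z‖ := by linarith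
    _ = 1 := by rw [hr_def]; ring
  have hballsub : ball z r ⊆ ball (0:ℂ) 1 := by
    intro w hw
    rw [mem_ball, dist_eq_norm] at hw
    rw [mem_ball_zero_iff]
    calc ‖w‖ = ‖w - z + z‖ := by ring_nf
    _ ≤ ‖w - z‖ + ‖z‖ := norm_add_le _ _
    _ < r + ‖z‖ := by linarith
    _ = 1 := by rw [hr_def]; ring
  set S := (fun w => ‖f w‖) '' closedBall z r with hS_def
  have hScompact : IsCompact S :=
    (isCompact_closedBall z r).image_of_continuousOn ((hc.mono hsub).norm)
  have hbdd : BddAbove S := hScompact.bddAbove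
  set M := sSup S with hM_def
  have hM : ∀ w ∈ closedBall z r, ‖f w‖ ≤ M := fun w hw => le_csSup hbdd ⟨w, hw, rfl⟩
  have hzball : z ∈ ball z r := mem_ball_self hr
  have hfz : ‖f z‖ ≤ M := hM z (ball_subset_closedBall hzball)
  by_cases hcase : ∃ w₀ ∈ ball z r, M ≤ ‖f w₀‖
  · obtain ⟨w₀, hw₀, hMw₀⟩ := hcase
    have hmax : IsMaxOn (norm ∘ f) (ball z r) w₀ := fun w hw =>
      le_trans (hM w (ball_subset_closedBall hw)) hMw₀
    have hconst : Set.EqOn f (Function.const ℂ (f w₀)) (ball z r) :=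
      Complex.eqOn_of_isPreconnected_of_isMaxOn_norm (convex_ball z r).isPreconnected
        isOpen_ball (hf.mono hballsub) hw₀ hmax
    have hd0 : deriv f z = 0 := by
      have hev : f =ᶠ[nhds z] Function.const ℂ (f w₀) :=
        Filter.eventuallyEq_of_mem (isOpen_ball.mem_nhds hzball) hconst
      rw [hev.deriv_eq]
      exact deriv_const z _
    rw [hd0]
    simpa using hfz
  · push_neg at hcase
    set a := f z with ha_def
    have haM : ‖a‖ < M := hcase z hzball
    have hMpos : 0 < M := lt_of_le_of_lt (norm_nonneg a) haM
    have key : ∀ b : ℂ, ‖b‖ < M → M * ‖b - a‖ < ‖(M:ℂ)^2 - (starRingEnd ℂ) a * b‖ := by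
      intro b hb
      have hid : ((M:ℂ)^2 - (starRingEnd ℂ) a * b) * (starRingEnd ℂ) ((M:ℂ)^2 - (starRingEnd ℂ) a * b)
          - (M:ℂ)^2 * ((b - a) * (starRingEnd ℂ) (b - a))
          = ((M:ℂ)^2 - a * (starRingEnd ℂ) a) * ((M:ℂ)^2 - b * (starRingEnd ℂ) b) := by
        simp only [map_sub, map_mul, map_pow, Complex.conj_conj, Complex.conj_ofReal]
        ring
      simp only [Complex.mul_conj] at hid
      have hidR : Complex.normSq ((M:ℂ)^2 - (starRingEnd ℂ) a * b) - M^2 * Complex.normSq (b - a)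
          = (M^2 - Complex.normSq a) * (M^2 - Complex.normSq b) := by exact_mod_cast hid
      have hna : Complex.normSq a < M^2 := by
        rw [Complex.normSq_eq_norm_sq]
        have := pow_lt_pow_left₀ haM (norm_nonneg a) (by norm_num : 2 ≠ 0)
        simpa using this
      have hnb : Complex.normSq b < M^2 := by
        rw [Complex.normSq_eq_norm_sq]
        have := pow_lt_pow_left₀ hb (norm_nonneg b) (by norm_num : 2 ≠ 0)
        simpa using this
      have hlt : M^2 * Complex.normSq (b - a) < Complex.normSq ((M:ℂ)^2 - (starRingEnd ℂ) a * b) := by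
        nlinarith
      have h1 : (M * ‖b - a‖)^2 < ‖(M:ℂ)^2 - (starRingEnd ℂ) a * b‖^2 := by
        rw [mul_pow]
        calc M^2 * ‖b - a‖^2 = M^2 * Complex.normSq (b - a) := by
              rw [Complex.normSq_eq_norm_sq]
        _ < Complex.normSq ((M:ℂ)^2 - (starRingEnd ℂ) a * b) := hlt
        _ = ‖(M:ℂ)^2 - (starRingEnd ℂ) a * b‖^2 := by rw [Complex.normSq_eq_norm_sq]
      exact lt_of_pow_lt_pow_left₀ 2 (norm_nonneg _) h1
    have hD : ∀ w ∈ ball z r, (M:ℂ)^2 - (starRingEnd ℂ) a * f w ≠ 0 := by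
      intro w hw
      have hkw := key (f w) (hcase w hw)
      have : 0 < ‖(M:ℂ)^2 - (starRingEnd ℂ) a * f w‖ :=
        lt_of_le_of_lt (by positivity) hkw
      exact norm_pos_iff.mp this
    set φ : ℂ → ℂ := fun w => (M:ℂ) * (f w - a) / ((M:ℂ)^2 - (starRingEnd ℂ) a * f w) with hφ_def
    have hfball : DifferentiableOn ℂ f (ball z r) := hf.mono hballsub
    have hφd : DifferentiableOn ℂ φ (ball z r) :=
      ((hfball.sub_const a).const_mul _).div
        ((differentiableOn_const _).sub (hfball.const_mul _)) hD
    have hφz : φ z = 0 := by simp [hφ_def, ← ha_def]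
    have hmaps : Set.MapsTo φ (ball z r) (ball (φ z) 1) := by
      intro w hw
      rw [hφz, mem_ball_zero_iff]
      have hkw := key (f w) (hcase w hw)
      have hDpos : 0 < ‖(M:ℂ)^2 - (starRingEnd ℂ) a * f w‖ :=
        lt_of_le_of_lt (by positivity) hkw
      rw [hφ_def]
      simp only [norm_div, norm_mul, Complex.norm_real, Real.norm_eq_abs,
        abs_of_pos hMpos]
      rw [div_lt_one hDpos]
      simpa using hkw
    have hschwarz : ‖deriv φ z‖ ≤ 1 / r :=
      Complex.norm_deriv_le_div_of_mapsTo_ball hφd (hmaps.mono_right ball_subset_closedBall) hr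
    -- compute deriv φ z
    have hfd : HasDerivAt f (deriv f z) z :=
      (hf.differentiableAt (isOpen_ball.mem_nhds hz)).hasDerivAt
    set d := deriv f z with hd_def
    have hnum : HasDerivAt (fun w => (M:ℂ) * (f w - a)) ((M:ℂ) * d) z :=
      (hfd.sub_const a).const_mul _
    have hden : HasDerivAt (fun w => (M:ℂ)^2 - (starRingEnd ℂ) a * f w)
        (-((starRingEnd ℂ) a * d)) z :=
      (hfd.const_mul ((starRingEnd ℂ) a)).const_sub _
    have hDz : (M:ℂ)^2 - (starRingEnd ℂ) a * a ≠ 0 := by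
      have := hD z hzball
      rwa [← ha_def] at this
    have hφhas : HasDerivAt φ
        (((M:ℂ) * d * ((M:ℂ)^2 - (starRingEnd ℂ) a * f z)
          - (M:ℂ) * (f z - a) * (-((starRingEnd ℂ) a * d)))
          / ((M:ℂ)^2 - (starRingEnd ℂ) a * f z)^2) z := by
      have hDz' : (M:ℂ)^2 - (starRingEnd ℂ) a * f z ≠ 0 := by rwa [← ha_def]
      exact hnum.div hden hDz'
    have hval : deriv φ z = (M:ℂ) * d / ((M:ℂ)^2 - (starRingEnd ℂ) a * a) := by
      rw [hφhas.deriv, ← ha_def]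
      field_simp
      ring
    have hna : Complex.normSq a < M^2 := by
      rw [Complex.normSq_eq_norm_sq]
      have := pow_lt_pow_left₀ haM (norm_nonneg a) (by norm_num : 2 ≠ 0)
      simpa using this
    have hnormval : ‖deriv φ z‖ = M * ‖d‖ / (M^2 - Complex.normSq a) := by
      have hca : (starRingEnd ℂ) a * a = (Complex.normSq a : ℂ) := by
        rw [mul_comm, Complex.mul_conj]
      have hval2 : deriv φ z = ((M:ℝ):ℂ) * d / (((M^2 - Complex.normSq a : ℝ)):ℂ) := by
        rw [hval, hca]; push_cast; ring_nf
      rw [hval2, norm_div, norm_mul, Complex.norm_real, Complex.norm_real,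
        Real.norm_eq_abs, Real.norm_eq_abs, abs_of_pos hMpos,
        abs_of_pos (by linarith : (0:ℝ) < M^2 - Complex.normSq a)]
    have hineq : M * ‖d‖ * r ≤ 1 * (M^2 - Complex.normSq a) := by
      rw [← div_le_div_iff₀ (by linarith) hr, ← hnormval]
      exact hschwarz
    have hnsq : Complex.normSq a = ‖a‖^2 := by
      rw [Complex.normSq_eq_norm_sq]
    rw [hnsq] at hineq
    have h4 : M * (‖d‖ * r) ≤ M * (2 * (M - ‖a‖)) := by
      nlinarith [sq_nonneg (M - ‖a‖)]
    have h5 : ‖d‖ * r ≤ 2 * (M - ‖a‖) := le_of_mul_le_mul_left h4 hMpos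
    have hgoal : 1 / 2 * r * ‖d‖ + ‖a‖ ≤ M := by nlinarith [h5]
    exact hgoal
end

section
/- Let f be holomorphic on 𝔻 and continuous on the closed disk. Then for every z ∈ 𝔻, (1 - |z|)|f'(z)| ≤ ((1/2π)∫₀^{2π} |f(e^{iτ}) - f(z)|² P(z, e^{iτ}) dτ)^{1/2} = (P[|f|²](z) - |f(z)|²)^{1/2}, where P(z, e^{iτ}) is the Poisson kernel. -/
open Metric Real

section Aux
open Complex

lemma normc (w : ℂ) : ((‖w‖^2 : ℝ) : ℂ) = w * (starRingEnd ℂ) w := by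
  rw [Complex.mul_conj]; norm_cast; rw [Complex.sq_norm]

lemma key_alg (w z : ℂ) (hw : w * (starRingEnd ℂ) w = 1) (h1 : w - z ≠ 0)
    (hz : ‖z‖ < 1) :
    (((1 - ‖z‖^2) / ‖w - z‖^2 : ℝ) : ℂ) =
      w * ((w - z)⁻¹ + (starRingEnd ℂ) z * (1 - (starRingEnd ℂ) z * w)⁻¹) := by
  have h2 : (1 : ℂ) - (starRingEnd ℂ) z * w ≠ 0 := by
    intro h
    have : ‖(starRingEnd ℂ) z * w‖ = 1 := by
      have : (starRingEnd ℂ) z * w = 1 := by linear_combination -h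
      rw [this, norm_one]
    have hw1 : ‖w‖ = 1 := by
      have := congrArg norm hw
      rw [norm_mul, RCLike.norm_conj, norm_one] at this
      nlinarith [norm_nonneg w]
    rw [norm_mul, RCLike.norm_conj, hw1, mul_one] at this
    linarith
  have h3 : (starRingEnd ℂ) (w - z) ≠ 0 := by
    simp only [ne_eq, map_eq_zero]; exact h1
  have hwz : ((‖w - z‖^2 : ℝ) : ℂ) = (w - z) * (starRingEnd ℂ) (w - z) := normc _
  have hzz : ((‖z‖^2 : ℝ) : ℂ) = z * (starRingEnd ℂ) z := normc _
  rw [Complex.ofReal_div, Complex.ofReal_sub, Complex.ofReal_one, hwz, hzz]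
  rw [map_sub] at h3 ⊢
  field_simp
  linear_combination (z * (starRingEnd ℂ) z - 1) * hw

noncomputable def Ez (τ : ℝ) : ℂ := Complex.exp (τ * Complex.I)

lemma Ez_circleMap (τ : ℝ) : circleMap 0 1 τ = Ez τ := by
  simp [circleMap, Ez]

lemma Ez_norm (τ : ℝ) : ‖Ez τ‖ = 1 := by
  simp [Ez, Complex.norm_exp_ofReal_mul_I]

lemma Ez_cont : Continuous Ez := by
  unfold Ez; fun_prop

lemma Ez_sub_ne (z : ℂ) (hz : ‖z‖ < 1) (τ : ℝ) : Ez τ - z ≠ 0 := by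
  intro h
  have : Ez τ = z := by linear_combination h
  rw [← this, Ez_norm] at hz; linarith

lemma Ez_norm_sub_pos (z : ℂ) (hz : ‖z‖ < 1) (τ : ℝ) : 0 < ‖Ez τ - z‖ := by
  exact norm_pos_iff.mpr (Ez_sub_ne z hz τ)

lemma poisson_rep (g : ℂ → ℂ) (hg : DiffContOnCl ℂ g (ball (0:ℂ) 1))
    (z : ℂ) (hz : z ∈ ball (0:ℂ) 1) :
    (∫ τ in (0:ℝ)..(2*π), (((1 - ‖z‖^2) / ‖Ez τ - z‖^2 : ℝ) : ℂ) * g (Ez τ))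
      = (2*π) * g z := by
  have hz' : ‖z‖ < 1 := by simpa using hz
  have hcont : ContinuousOn g (closedBall (0:ℂ) 1) := by
    have := hg.continuousOn
    rwa [closure_ball (0:ℂ) one_ne_zero] at this
  have hgE : Continuous fun τ => g (Ez τ) := by
    apply hcont.comp_continuous Ez_cont
    intro τ; simp [Ez_norm τ, mem_closedBall, dist_eq_norm]
  have hker : ∀ w ∈ closedBall (0:ℂ) 1, (1 : ℂ) - (starRingEnd ℂ) z * w ≠ 0 := by
    intro w hw h
    have h1 : (starRingEnd ℂ) z * w = 1 := by linear_combination -h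
    have := congrArg norm h1
    rw [norm_mul, RCLike.norm_conj, norm_one] at this
    have hw1 : ‖w‖ ≤ 1 := by simpa [mem_closedBall, dist_eq_norm] using hw
    nlinarith [norm_nonneg w, norm_nonneg z]
  have I1 : (∮ ζ in C(0, 1), (ζ - z)⁻¹ • g ζ) = (2 * π * Complex.I) • g z :=
    hg.circleIntegral_sub_inv_smul hz
  have I2 : (∮ ζ in C(0, 1), (starRingEnd ℂ) z * (1 - (starRingEnd ℂ) z * ζ)⁻¹ * g ζ) = 0 := by
    apply Complex.circleIntegral_eq_zero_of_differentiable_on_off_countable zero_le_one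
      Set.countable_empty
    · apply ContinuousOn.mul _ hcont
      apply ContinuousOn.mul continuousOn_const
      exact ContinuousOn.inv₀ (by fun_prop) hker
    · intro x hx
      have hx' : x ∈ ball (0:ℂ) 1 := hx.1
      have hgx : DifferentiableAt ℂ g x :=
        hg.differentiableOn.differentiableAt (isOpen_ball.mem_nhds hx')
      have hkx : (1 : ℂ) - (starRingEnd ℂ) z * x ≠ 0 := hker x (ball_subset_closedBall hx')
      fun_prop (disch := exact hkx)
  -- combine the two circle integrals
  have hA : IntervalIntegrable (fun τ => deriv (circleMap 0 1) τ • ((circleMap 0 1 τ - z)⁻¹ • g (circleMap 0 1 τ))) MeasureTheory.volume 0 (2*π) := by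
    apply Continuous.intervalIntegrable
    have : Continuous fun τ => (Ez τ - z)⁻¹ := by
      exact Continuous.inv₀ (Ez_cont.sub continuous_const) (fun τ => Ez_sub_ne z hz' τ)
    simp only [deriv_circleMap, Ez_circleMap]
    exact ((Ez_cont.mul continuous_const).smul (this.smul hgE))
  have hB : IntervalIntegrable (fun τ => deriv (circleMap 0 1) τ • ((starRingEnd ℂ) z * (1 - (starRingEnd ℂ) z * circleMap 0 1 τ)⁻¹ * g (circleMap 0 1 τ))) MeasureTheory.volume 0 (2*π) := by
    apply Continuous.intervalIntegrable
    have hne : ∀ τ, (1 : ℂ) - (starRingEnd ℂ) z * Ez τ ≠ 0 := by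
      intro τ
      apply hker
      simp [Ez_norm τ, mem_closedBall, dist_eq_norm]
    have : Continuous fun τ => ((1 : ℂ) - (starRingEnd ℂ) z * Ez τ)⁻¹ :=
      Continuous.inv₀ (continuous_const.sub (continuous_const.mul Ez_cont)) hne
    simp only [deriv_circleMap, Ez_circleMap]
    exact ((Ez_cont.mul continuous_const).smul ((continuous_const.mul this).mul hgE))
  have hsum := congrArg₂ (· + ·) I1 I2
  simp only [circleIntegral] at hsum
  rw [← intervalIntegral.integral_add hA hB] at hsum
  have hpt : ∀ τ : ℝ, deriv (circleMap 0 1) τ • ((circleMap 0 1 τ - z)⁻¹ • g (circleMap 0 1 τ))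
      + deriv (circleMap 0 1) τ • ((starRingEnd ℂ) z * (1 - (starRingEnd ℂ) z * circleMap 0 1 τ)⁻¹ * g (circleMap 0 1 τ))
      = Complex.I * ((((1 - ‖z‖^2) / ‖Ez τ - z‖^2 : ℝ) : ℂ) * g (Ez τ)) := by
    intro τ
    have hw : Ez τ * (starRingEnd ℂ) (Ez τ) = 1 := by
      rw [Complex.mul_conj]
      norm_cast
      rw [Complex.normSq_eq_norm_sq, Ez_norm]
      norm_num
    have halg := key_alg (Ez τ) z hw (Ez_sub_ne z hz' τ) hz'
    simp only [deriv_circleMap, Ez_circleMap, smul_eq_mul]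
    rw [halg]
    ring
  simp only [hpt] at hsum
  rw [intervalIntegral.integral_const_mul] at hsum
  have : (2 * ↑π * Complex.I) • g z = Complex.I * ((2*π) * g z) := by
    simp [smul_eq_mul]; ring
  rw [this, add_zero] at hsum
  exact mul_left_cancel₀ Complex.I_ne_zero hsum

lemma contP (z : ℂ) (hz : ‖z‖ < 1) :
    Continuous fun τ => (1 - ‖z‖^2) / ‖Ez τ - z‖^2 := by
  apply continuous_const.div ((Ez_cont.sub continuous_const).norm.pow 2)
  intro τ
  have := Ez_norm_sub_pos z hz τ
  exact pow_ne_zero 2 this.ne'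

lemma eq_part (f : ℂ → ℂ) (hfD : DiffContOnCl ℂ f (ball (0:ℂ) 1))
    (z : ℂ) (hz : z ∈ ball (0:ℂ) 1) :
    (∫ τ in (0:ℝ)..(2*π), ‖f (Ez τ) - f z‖^2 * ((1 - ‖z‖^2) / ‖Ez τ - z‖^2))
      = (∫ τ in (0:ℝ)..(2*π), ‖f (Ez τ)‖^2 * ((1 - ‖z‖^2) / ‖Ez τ - z‖^2))
        - 2 * π * ‖f z‖^2 := by
  have hz' : ‖z‖ < 1 := by simpa using hz
  set c := f z with hc
  set P : ℝ → ℝ := fun τ => (1 - ‖z‖^2) / ‖Ez τ - z‖^2 with hP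
  have hPc : Continuous P := contP z hz'
  have hcont : ContinuousOn f (closedBall (0:ℂ) 1) := by
    have := hfD.continuousOn
    rwa [closure_ball (0:ℂ) one_ne_zero] at this
  have hgE : Continuous fun τ => f (Ez τ) := by
    apply hcont.comp_continuous Ez_cont
    intro τ; simp [Ez_norm τ, mem_closedBall, dist_eq_norm]
  -- ∫ P = 2π
  have hP1 : (∫ τ in (0:ℝ)..(2*π), P τ) = 2 * π := by
    have h := poisson_rep (fun _ => 1) diffContOnCl_const z hz
    simp only [mul_one] at h
    have h2 : (∫ τ in (0:ℝ)..(2*π), ((P τ : ℝ) : ℂ)) = ((2*π : ℝ) : ℂ) := by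
        rw [h]; norm_cast
    rw [intervalIntegral.integral_ofReal] at h2
    exact_mod_cast h2
  -- ∫ P * f = 2π f z
  have hPf : (∫ τ in (0:ℝ)..(2*π), ((P τ : ℝ) : ℂ) * f (Ez τ)) = 2 * π * c := by
    have h := poisson_rep f hfD z hz
    exact h.trans (by ring)
  -- real part integral
  have hInt1 : IntervalIntegrable (fun τ => ((starRingEnd ℂ) c * (((P τ : ℝ) : ℂ) * f (Ez τ)))) MeasureTheory.volume 0 (2*π) := by
    apply Continuous.intervalIntegrable
    exact continuous_const.mul ((Complex.continuous_ofReal.comp hPc).mul hgE)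
  have hre : (∫ τ in (0:ℝ)..(2*π), ((starRingEnd ℂ) c * (((P τ : ℝ) : ℂ) * f (Ez τ))).re)
      = 2 * π * ‖c‖^2 := by
    have h1 := Complex.reCLM.intervalIntegral_comp_comm hInt1
    have h2 : (∫ τ in (0:ℝ)..(2*π), ((starRingEnd ℂ) c * (((P τ : ℝ) : ℂ) * f (Ez τ))))
        = (starRingEnd ℂ) c * (2 * π * c) := by
      rw [← hPf, ← intervalIntegral.integral_const_mul]
    simp only [Complex.reCLM_apply] at h1
    rw [h1, h2]
    have hcc : c * (starRingEnd ℂ) c = ((‖c‖^2 : ℝ) : ℂ) := (normc c).symm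
    have : (starRingEnd ℂ) c * (2 * (π:ℂ) * c) = ((2 * π * ‖c‖^2 : ℝ) : ℂ) := by
      push_cast at hcc ⊢
      linear_combination (2*(π:ℂ)) * hcc
    rw [this, Complex.ofReal_re]
  -- pointwise expansion
  have hpt : ∀ τ : ℝ, ‖f (Ez τ) - c‖^2 * P τ
      = ‖f (Ez τ)‖^2 * P τ + ‖c‖^2 * P τ
        - 2 * ((starRingEnd ℂ) c * (((P τ : ℝ) : ℂ) * f (Ez τ))).re := by
    intro τ
    have e1 : ‖f (Ez τ) - c‖^2 = ‖f (Ez τ)‖^2 + ‖c‖^2 - 2 * (f (Ez τ) * (starRingEnd ℂ) c).re := by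
      rw [Complex.sq_norm, Complex.sq_norm, Complex.sq_norm, Complex.normSq_sub]
    have e2 : ((starRingEnd ℂ) c * (((P τ : ℝ) : ℂ) * f (Ez τ))).re
        = P τ * (f (Ez τ) * (starRingEnd ℂ) c).re := by
      have : (starRingEnd ℂ) c * (((P τ : ℝ) : ℂ) * f (Ez τ))
          = ((P τ : ℝ) : ℂ) * (f (Ez τ) * (starRingEnd ℂ) c) := by ring
      rw [this, Complex.re_ofReal_mul]
    rw [e1, e2]; ring
  have hi1 : IntervalIntegrable (fun τ => ‖f (Ez τ)‖^2 * P τ) MeasureTheory.volume 0 (2*π) := by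
    apply Continuous.intervalIntegrable
    exact (hgE.norm.pow 2).mul hPc
  have hi2 : IntervalIntegrable (fun τ => ‖c‖^2 * P τ) MeasureTheory.volume 0 (2*π) := by
    apply Continuous.intervalIntegrable
    exact continuous_const.mul hPc
  have hi3 : IntervalIntegrable (fun τ => ((starRingEnd ℂ) c * (((P τ : ℝ) : ℂ) * f (Ez τ))).re) MeasureTheory.volume 0 (2*π) := by
    apply Continuous.intervalIntegrable
    exact Complex.continuous_re.comp (continuous_const.mul ((Complex.continuous_ofReal.comp hPc).mul hgE))
  calc (∫ τ in (0:ℝ)..(2*π), ‖f (Ez τ) - c‖^2 * P τ)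
      = ∫ τ in (0:ℝ)..(2*π), (‖f (Ez τ)‖^2 * P τ + ‖c‖^2 * P τ
          - 2 * ((starRingEnd ℂ) c * (((P τ : ℝ) : ℂ) * f (Ez τ))).re) := by
        congr 1; funext τ; exact hpt τ
    _ = (∫ τ in (0:ℝ)..(2*π), ‖f (Ez τ)‖^2 * P τ) + ‖c‖^2 * (∫ τ in (0:ℝ)..(2*π), P τ)
          - 2 * ∫ τ in (0:ℝ)..(2*π), ((starRingEnd ℂ) c * (((P τ : ℝ) : ℂ) * f (Ez τ))).re := by
        rw [intervalIntegral.integral_sub (hi1.add hi2) (hi3.const_mul 2),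
          intervalIntegral.integral_add hi1 hi2, intervalIntegral.integral_const_mul,
          intervalIntegral.integral_const_mul]
    _ = (∫ τ in (0:ℝ)..(2*π), ‖f (Ez τ)‖^2 * P τ) - 2 * π * ‖c‖^2 := by
        rw [hP1, hre]; ring

set_option maxHeartbeats 1000000 in
lemma deriv_rep (f : ℂ → ℂ) (hf : DifferentiableOn ℂ f (ball (0:ℂ) 1))
    (hco : ContinuousOn f (closedBall (0:ℂ) 1))
    (z : ℂ) (hz : z ∈ ball (0:ℂ) 1) :
    2 * π * Complex.I * deriv f z
      = ∫ τ in (0:ℝ)..(2*π),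
          (Ez τ * Complex.I) * (((Ez τ - z)^2)⁻¹ * (f (Ez τ) - f z)) := by
  have hz' : ‖z‖ < 1 := by simpa using hz
  have hfD : DiffContOnCl ℂ f (ball (0:ℂ) 1) :=
    ⟨hf, by rwa [closure_ball (0:ℂ) one_ne_zero]⟩
  have hgE : Continuous fun τ => f (Ez τ) := by
    apply hco.comp_continuous Ez_cont
    intro τ; simp [Ez_norm τ, mem_closedBall, dist_eq_norm]
  set ε : ℝ := (1 - ‖z‖) / 2 with hε
  have ε_pos : 0 < ε := by simp only [hε]; linarith
  have hball : ball z ε ⊆ ball (0:ℂ) 1 := by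
    intro w hw
    have h1 : ‖w - z‖ < ε := by simpa [mem_ball, dist_eq_norm] using hw
    have : ‖w‖ ≤ ‖w - z‖ + ‖z‖ := by
      simpa using norm_add_le (w - z) z
    simp only [mem_ball, dist_zero_right]
    simp only [hε] at h1; linarith
  have hEw : ∀ w ∈ ball z ε, ∀ τ : ℝ, ε ≤ ‖Ez τ - w‖ := by
    intro w hw τ
    have h1 : ‖w - z‖ < ε := by simpa [mem_ball, dist_eq_norm] using hw
    have h2 : ‖z‖ - ‖w - z‖ ≤ ‖w‖ → True := fun _ => trivial
    have h3 : ‖w‖ ≤ ‖w - z‖ + ‖z‖ := by simpa using norm_add_le (w - z) z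
    have h4 : (1:ℝ) - ‖w‖ ≤ ‖Ez τ - w‖ := by
      have := norm_sub_norm_le (Ez τ) w
      rw [Ez_norm] at this; linarith
    simp only [hε] at h1 ⊢; linarith
  have hEwne : ∀ w ∈ ball z ε, ∀ τ : ℝ, Ez τ - w ≠ 0 := by
    intro w hw τ h
    have := hEw w hw τ
    rw [h, norm_zero] at this; linarith
  obtain ⟨M, hM⟩ := (isCompact_closedBall (0:ℂ) 1).exists_bound_of_continuousOn hco
  have hM0 : 0 ≤ M := le_trans (norm_nonneg _) (hM 0 (by simp))
  set μ := MeasureTheory.volume.restrict (Set.Ioc (0:ℝ) (2*π)) with hμ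
  set F : ℂ → ℝ → ℂ := fun w τ => (Ez τ * Complex.I) * ((Ez τ - w)⁻¹ * f (Ez τ)) with hF
  set F' : ℂ → ℝ → ℂ := fun w τ => (Ez τ * Complex.I) * (((Ez τ - w)^2)⁻¹ * f (Ez τ)) with hF'
  have hFcont : ∀ w ∈ ball z ε, Continuous (F w) := by
    intro w hw
    exact (Ez_cont.mul continuous_const).mul
      ((Continuous.inv₀ (Ez_cont.sub continuous_const) (hEwne w hw)).mul hgE)
  have hF'cont : ∀ w ∈ ball z ε, Continuous (F' w) := by
    intro w hw
    exact (Ez_cont.mul continuous_const).mul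
      ((Continuous.inv₀ ((Ez_cont.sub continuous_const).pow 2)
        (fun τ => pow_ne_zero 2 (hEwne w hw τ))).mul hgE)
  have hzball : z ∈ ball z ε := mem_ball_self ε_pos
  have key := hasDerivAt_integral_of_dominated_loc_of_deriv_le (μ := μ)
    (F := F) (F' := F') (x₀ := z) (bound := fun _ => M / ε^2) (s := ball z ε) (ball_mem_nhds z ε_pos)
    (Filter.eventually_of_mem (ball_mem_nhds z ε_pos)
      (fun w hw => (hFcont w hw).aestronglyMeasurable))
    ((hFcont z hzball).integrableOn_Ioc)
    ((hF'cont z hzball).aestronglyMeasurable)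
    (Filter.Eventually.of_forall (fun τ w hw => by
      have h1 : ε ≤ ‖Ez τ - w‖ := hEw w hw τ
      have h2 : ‖f (Ez τ)‖ ≤ M := hM _ (by simp [Ez_norm τ, mem_closedBall, dist_eq_norm])
      have h3 : ‖F' w τ‖ = ‖f (Ez τ)‖ / ‖Ez τ - w‖^2 := by
        simp only [hF', norm_mul, norm_inv, norm_pow, Ez_norm, Complex.norm_I, one_mul]
        rw [div_eq_mul_inv]; ring
      rw [h3]
      exact div_le_div₀ hM0 h2 (by positivity) (pow_le_pow_left₀ ε_pos.le h1 2)))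
    (MeasureTheory.integrableOn_const measure_Ioc_lt_top.ne)
    (Filter.Eventually.of_forall (fun τ w hw => by
      have h1 : HasDerivAt (fun w => Ez τ - w) (-1) w := (hasDerivAt_id w).const_sub (Ez τ)
      have h2 := h1.inv (hEwne w hw τ)
      have h4 := (h2.mul_const (f (Ez τ))).const_mul (Ez τ * Complex.I)
      have h5 : Ez τ * Complex.I * (-(-1) / (Ez τ - w) ^ 2 * f (Ez τ)) = F' w τ := by
        simp only [hF']; ring
      rw [h5] at h4
      exact h4))
  obtain ⟨-, hder⟩ := key
  have h_eq : (fun w => 2 * ↑π * Complex.I * f w) =ᶠ[nhds z] fun w => ∫ τ, F w τ ∂μ := by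
    apply Filter.eventually_of_mem (ball_mem_nhds z ε_pos)
    intro w hw
    show 2 * ↑π * Complex.I * f w = ∫ τ, F w τ ∂μ
    have h1 := hfD.circleIntegral_sub_inv_smul (hball hw)
    simp only [circleIntegral, deriv_circleMap, Ez_circleMap, smul_eq_mul] at h1
    rw [← h1, hμ, ← intervalIntegral.integral_of_le Real.two_pi_pos.le]
  have hder2 : HasDerivAt (fun w => 2 * ↑π * Complex.I * f w) (∫ τ, F' z τ ∂μ) z :=
    hder.congr_of_eventuallyEq h_eq
  have hfz : HasDerivAt f (deriv f z) z :=
    (hf.differentiableAt (isOpen_ball.mem_nhds hz)).hasDerivAt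
  have hud : 2 * ↑π * Complex.I * deriv f z = ∫ τ, F' z τ ∂μ :=
    (hfz.const_mul (2 * ↑π * Complex.I)).unique hder2
  -- now subtract the constant term
  have hzero : (∫ τ in (0:ℝ)..(2*π), (Ez τ * Complex.I) * ((Ez τ - z)^2)⁻¹) = 0 := by
    have h := circleIntegral.integral_sub_zpow_of_ne (by decide : (-2:ℤ) ≠ -1) 0 z 1
    simp only [circleIntegral, deriv_circleMap, Ez_circleMap, smul_eq_mul,
      show ∀ (x:ℂ), x^(-2:ℤ) = (x^2)⁻¹ from fun x => by rw [zpow_neg]; norm_cast] at h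
    exact h
  have hi1 : IntervalIntegrable (fun τ => (Ez τ * Complex.I) * (((Ez τ - z)^2)⁻¹ * (f (Ez τ) - f z)))
      MeasureTheory.volume 0 (2*π) := by
    apply Continuous.intervalIntegrable
    exact (Ez_cont.mul continuous_const).mul
      ((Continuous.inv₀ ((Ez_cont.sub continuous_const).pow 2)
        (fun τ => pow_ne_zero 2 (hEwne z hzball τ))).mul (hgE.sub continuous_const))
  have hi2 : IntervalIntegrable (fun τ => (Ez τ * Complex.I) * ((Ez τ - z)^2)⁻¹ * f z)
      MeasureTheory.volume 0 (2*π) := by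
    apply Continuous.intervalIntegrable
    exact ((Ez_cont.mul continuous_const).mul
      (Continuous.inv₀ ((Ez_cont.sub continuous_const).pow 2)
        (fun τ => pow_ne_zero 2 (hEwne z hzball τ)))).mul continuous_const
  have hμeq : (∫ τ, F' z τ ∂μ) = ∫ τ in (0:ℝ)..(2*π), F' z τ := by
    rw [intervalIntegral.integral_of_le Real.two_pi_pos.le]
  rw [hud, hμeq]
  have hsplit : ∀ τ : ℝ, F' z τ
      = (Ez τ * Complex.I) * (((Ez τ - z)^2)⁻¹ * (f (Ez τ) - f z))
        + (Ez τ * Complex.I) * ((Ez τ - z)^2)⁻¹ * f z := by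
    intro τ; simp only [hF']; ring
  calc (∫ τ in (0:ℝ)..(2*π), F' z τ)
      = ∫ τ in (0:ℝ)..(2*π), ((Ez τ * Complex.I) * (((Ez τ - z)^2)⁻¹ * (f (Ez τ) - f z))
          + (Ez τ * Complex.I) * ((Ez τ - z)^2)⁻¹ * f z) := by
        congr 1; funext τ; exact hsplit τ
    _ = (∫ τ in (0:ℝ)..(2*π), (Ez τ * Complex.I) * (((Ez τ - z)^2)⁻¹ * (f (Ez τ) - f z)))
          + (∫ τ in (0:ℝ)..(2*π), (Ez τ * Complex.I) * ((Ez τ - z)^2)⁻¹) * f z := by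
        rw [intervalIntegral.integral_add hi1 hi2, intervalIntegral.integral_mul_const]
    _ = ∫ τ in (0:ℝ)..(2*π), (Ez τ * Complex.I) * (((Ez τ - z)^2)⁻¹ * (f (Ez τ) - f z)) := by
        rw [hzero]; ring

lemma poisson_one (z : ℂ) (hz : z ∈ ball (0:ℂ) 1) :
    (∫ τ in (0:ℝ)..(2*π), (1 - ‖z‖^2) / ‖Ez τ - z‖^2) = 2 * π := by
  have h := poisson_rep (fun _ => 1) diffContOnCl_const z hz
  simp only [mul_one] at h
  have h2 : (∫ τ in (0:ℝ)..(2*π), (((1 - ‖z‖^2) / ‖Ez τ - z‖^2 : ℝ) : ℂ)) = ((2*π : ℝ) : ℂ) := by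
    rw [h]; norm_cast
  rw [intervalIntegral.integral_ofReal] at h2
  exact_mod_cast h2

set_option maxHeartbeats 1000000 in
lemma ineq_part (f : ℂ → ℂ) (hf : DifferentiableOn ℂ f (ball (0:ℂ) 1))
    (hco : ContinuousOn f (closedBall (0:ℂ) 1))
    (z : ℂ) (hz : z ∈ ball (0:ℂ) 1) :
    (1 - ‖z‖) * ‖deriv f z‖ ≤
      Real.sqrt ((1 / (2 * π)) *
        ∫ τ in (0:ℝ)..(2*π), ‖f (Ez τ) - f z‖^2 * ((1 - ‖z‖^2) / ‖Ez τ - z‖^2)) := by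
  have hz' : ‖z‖ < 1 := by simpa using hz
  have hgE : Continuous fun τ => f (Ez τ) := by
    apply hco.comp_continuous Ez_cont
    intro τ; simp [Ez_norm τ, mem_closedBall, dist_eq_norm]
  set r2 : ℝ := 1 - ‖z‖^2 with hr2def
  have hr2 : 0 < r2 := by simp only [hr2def]; nlinarith [norm_nonneg z]
  set S : ℝ := ∫ τ in (0:ℝ)..(2*π), ‖f (Ez τ) - f z‖^2 * (r2 / ‖Ez τ - z‖^2) with hSdef
  have hdpos : ∀ τ : ℝ, 0 < ‖Ez τ - z‖ := Ez_norm_sub_pos z hz'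
  have hS0 : 0 ≤ S := by
    apply intervalIntegral.integral_nonneg Real.two_pi_pos.le
    intro τ _
    have := hdpos τ
    positivity
  -- Step 1 : 2π ‖f'‖ ≤ ∫ ‖f - c‖ / d²
  have hnormint : Continuous fun τ => ‖f (Ez τ) - f z‖ / ‖Ez τ - z‖^2 := by
    apply Continuous.div (hgE.sub continuous_const).norm
      ((Ez_cont.sub continuous_const).norm.pow 2)
    intro τ; have := hdpos τ; exact pow_ne_zero 2 this.ne'
  have step1 : 2 * π * ‖deriv f z‖ ≤
      ∫ τ in (0:ℝ)..(2*π), ‖f (Ez τ) - f z‖ / ‖Ez τ - z‖^2 := by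
    have h := deriv_rep f hf hco z hz
    have hL : ‖2 * (π:ℂ) * Complex.I * deriv f z‖ = 2 * π * ‖deriv f z‖ := by
      simp [norm_mul, Real.pi_nonneg, abs_of_nonneg]
    calc 2 * π * ‖deriv f z‖ = ‖2 * (π:ℂ) * Complex.I * deriv f z‖ := hL.symm
      _ = ‖∫ τ in (0:ℝ)..(2*π), (Ez τ * Complex.I) * (((Ez τ - z)^2)⁻¹ * (f (Ez τ) - f z))‖ := by
          rw [h]
      _ ≤ ∫ τ in (0:ℝ)..(2*π), ‖(Ez τ * Complex.I) * (((Ez τ - z)^2)⁻¹ * (f (Ez τ) - f z))‖ :=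
          intervalIntegral.norm_integral_le_integral_norm Real.two_pi_pos.le
      _ = ∫ τ in (0:ℝ)..(2*π), ‖f (Ez τ) - f z‖ / ‖Ez τ - z‖^2 := by
          congr 1; funext τ
          simp only [norm_mul, norm_inv, norm_pow, Ez_norm, Complex.norm_I, one_mul]
          rw [div_eq_mul_inv]; ring
  -- Step 2 : AM-GM bound for each s > 0
  have step2 : ∀ s : ℝ, 0 < s → 2 * π * ‖deriv f z‖ ≤ (s * S + 2 * π / (s * r2^2)) / 2 := by
    intro s hs
    have hint1 : IntervalIntegrable (fun τ => ‖f (Ez τ) - f z‖ / ‖Ez τ - z‖^2)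
        MeasureTheory.volume 0 (2*π) := hnormint.intervalIntegrable _ _
    have hPcont : Continuous fun τ => r2 / ‖Ez τ - z‖^2 := contP z hz'
    have hint2 : IntervalIntegrable
        (fun τ => (s * (‖f (Ez τ) - f z‖^2 * (r2 / ‖Ez τ - z‖^2))
          + (1/(s*r2^2)) * (r2 / ‖Ez τ - z‖^2)) / 2) MeasureTheory.volume 0 (2*π) := by
      apply Continuous.intervalIntegrable
      exact ((continuous_const.mul ((hgE.sub continuous_const).norm.pow 2|>.mul hPcont)).add
        (continuous_const.mul hPcont)).div_const 2
    have hpt : ∀ τ ∈ Set.Icc (0:ℝ) (2*π),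
        ‖f (Ez τ) - f z‖ / ‖Ez τ - z‖^2
          ≤ (s * (‖f (Ez τ) - f z‖^2 * (r2 / ‖Ez τ - z‖^2))
            + (1/(s*r2^2)) * (r2 / ‖Ez τ - z‖^2)) / 2 := by
      intro τ _
      set a := ‖f (Ez τ) - f z‖ with ha
      set d := ‖Ez τ - z‖ with hd
      have hdp : 0 < d := hdpos τ
      have key : (s * (a^2 * (r2/d^2)) + (1/(s*r2^2)) * (r2/d^2)) / 2 - a / d^2
          = (r2/d^2) * (s * r2 * a - 1)^2 / (2 * s * r2^2) := by
        field_simp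
        ring
      have hnn : 0 ≤ r2 / d^2 * (s * r2 * a - 1)^2 / (2 * s * r2^2) := by positivity
      linarith [key, hnn]
    have hmono := intervalIntegral.integral_mono_on Real.two_pi_pos.le hint1 hint2 hpt
    have hintS : IntervalIntegrable (fun τ => ‖f (Ez τ) - f z‖^2 * (r2 / ‖Ez τ - z‖^2))
        MeasureTheory.volume 0 (2*π) := by
      apply Continuous.intervalIntegrable
      exact ((hgE.sub continuous_const).norm.pow 2).mul hPcont
    have hintP : IntervalIntegrable (fun τ => r2 / ‖Ez τ - z‖^2)
        MeasureTheory.volume 0 (2*π) := hPcont.intervalIntegrable _ _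
    have hsplit : (∫ τ in (0:ℝ)..(2*π),
        (s * (‖f (Ez τ) - f z‖^2 * (r2 / ‖Ez τ - z‖^2))
          + (1/(s*r2^2)) * (r2 / ‖Ez τ - z‖^2)) / 2)
        = (s * S + (1/(s*r2^2)) * (2*π)) / 2 := by
      have e1 : (∫ τ in (0:ℝ)..(2*π),
          (s * (‖f (Ez τ) - f z‖^2 * (r2 / ‖Ez τ - z‖^2))
            + (1/(s*r2^2)) * (r2 / ‖Ez τ - z‖^2)) / 2)
          = (∫ τ in (0:ℝ)..(2*π),
            (s * (‖f (Ez τ) - f z‖^2 * (r2 / ‖Ez τ - z‖^2))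
              + (1/(s*r2^2)) * (r2 / ‖Ez τ - z‖^2))) / 2 :=
        intervalIntegral.integral_div 2 _
      rw [e1, intervalIntegral.integral_add ((hintS.const_mul s)) ((hintP.const_mul _)),
        intervalIntegral.integral_const_mul, intervalIntegral.integral_const_mul,
        ← hSdef, poisson_one z hz]
    rw [hsplit] at hmono
    have : (1/(s*r2^2)) * (2*π) = 2 * π / (s * r2^2) := by ring
    rw [this] at hmono
    exact le_trans step1 hmono
  -- Final
  have harg : (1 / (2*π)) * S = S / (2*π) := by ring
  have h1z : 1 - ‖z‖ ≤ r2 := by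
    simp only [hr2def]; nlinarith [norm_nonneg z, hz'.le]
  have hred : r2 * ‖deriv f z‖ ≤ Real.sqrt (S / (2*π)) → (1 - ‖z‖) * ‖deriv f z‖ ≤
      Real.sqrt ((1 / (2*π)) * S) := by
    intro h
    rw [harg]
    exact le_trans (mul_le_mul_of_nonneg_right h1z (norm_nonneg _)) h
  apply hred
  set T := Real.sqrt (S / (2*π)) with hT
  have hT0 : 0 ≤ T := Real.sqrt_nonneg _
  have hT2 : T^2 = S / (2*π) := Real.sq_sqrt (by positivity)
  have hST : S = 2*π*T^2 := by rw [hT2]; field_simp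
  rcases eq_or_lt_of_le hS0 with hS | hS
  · -- S = 0
    have hf0 : ‖deriv f z‖ ≤ 0 := by
      by_contra hcon
      push_neg at hcon
      set δ := ‖deriv f z‖ / 2 with hδ
      have hδp : 0 < δ := by positivity
      have := step2 (1/(2*δ*r2^2)) (by positivity)
      rw [← hS] at this
      have he : ((1/(2*δ*r2^2)) * 0 + 2*π/((1/(2*δ*r2^2)) * r2^2)) / 2 = 2*π*δ := by
        field_simp
        ring
      rw [he] at this
      have hd2 : ‖deriv f z‖ ≤ δ := by
        have h2π : (0:ℝ) < 2*π := Real.two_pi_pos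
        nlinarith
      simp only [hδ] at hd2
      linarith
    have : ‖deriv f z‖ = 0 := le_antisymm hf0 (norm_nonneg _)
    rw [this, mul_zero]
    exact hT0
  · -- S > 0
    have hTp : 0 < T := Real.sqrt_pos.2 (by positivity)
    have := step2 (1/(T*r2)) (by positivity)
    have he : ((1/(T*r2)) * S + 2*π/((1/(T*r2)) * r2^2)) / 2 = 2*π*T/r2 := by
      rw [hST]
      field_simp
      ring
    rw [he] at this
    have h2π : (0:ℝ) < 2*π := Real.two_pi_pos
    have h3 := mul_le_mul_of_nonneg_left this hr2.le
    have h4 : r2 * (2*π*T/r2) = 2*π*T := by field_simp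
    rw [h4] at h3
    nlinarith [h3, h2π]

end Aux

theorem stmt16 (f : ℂ → ℂ)
    (hf : DifferentiableOn ℂ f (ball (0:ℂ) 1))
    (hc : ContinuousOn f (closedBall (0:ℂ) 1))
    (z : ℂ) (hz : z ∈ ball (0:ℂ) 1) :
    (1 - ‖z‖) * ‖deriv f z‖ ≤
      Real.sqrt ((1 / (2 * π)) *
        ∫ τ in (0:ℝ)..(2 * π),
          ‖f (Complex.exp (τ * Complex.I)) - f z‖ ^ 2 *
            ((1 - ‖z‖ ^ 2) / ‖Complex.exp (τ * Complex.I) - z‖ ^ 2)) ∧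
    (1 / (2 * π)) *
        ∫ τ in (0:ℝ)..(2 * π),
          ‖f (Complex.exp (τ * Complex.I)) - f z‖ ^ 2 *
            ((1 - ‖z‖ ^ 2) / ‖Complex.exp (τ * Complex.I) - z‖ ^ 2)
      = ((1 / (2 * π)) *
          ∫ τ in (0:ℝ)..(2 * π),
            ‖f (Complex.exp (τ * Complex.I))‖ ^ 2 *
              ((1 - ‖z‖ ^ 2) / ‖Complex.exp (τ * Complex.I) - z‖ ^ 2)) - ‖f z‖ ^ 2 := by
  have hE : ∀ τ : ℝ, Complex.exp (τ * Complex.I) = Ez τ := fun _ => rfl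
  simp only [hE]
  constructor
  · exact ineq_part f hf hc z hz
  · have hfD : DiffContOnCl ℂ f (ball (0:ℂ) 1) :=
      ⟨hf, by rwa [closure_ball (0:ℂ) one_ne_zero]⟩
    have h := eq_part f hfD z hz
    rw [h, mul_sub]
    have h2 : (1/(2*π)) * (2*π*‖f z‖^2) = ‖f z‖^2 := by
      field_simp
    rw [h2]
end
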